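/- arXiv:2010.07382 — 9 statements merged into one kernel-verified Lean document; each statement's English description precedes it below -/
import Mathlib

section
/- For any two conditional probability mass functions f(·|x) and q(·|x,z^n) on a finite set Y, let δ = max_{y∈Y} ln(f(y|x)/q(y|x,z^n)) be the worst-case redundancy, and let h_q(x,z^n) = argmax_y q(y|x,z^n) and h_MAP(x) = argmax_y f(y|x). Then the misclassification gap satisfies (1 - f(h_q(x,z^n)|x)) - (1 - f(h_MAP(x)|x)) ≤ e^δ - 1. -/
/-- **Redundancy-based misclassification bound (Lemma 1 of the paper).**
`f` and `q` are probability mass functions on the finite alphabet `Y`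
(`f = f(·|x)`, `q = q(·|x,zⁿ)`), with `q` strictly positive wherever `f` is positive.
Let `δ = max_{y∈Y} ln (f y / q y)` (given here via the hypothesis `hδ` stating that `δ`
is the least upper bound of the log-ratios), let `yq` be a maximizer of `q`
(the decision `h_q(x,zⁿ)`) and `yMAP` a maximizer of `f` (the MAP decision `h_MAP(x)`).
Then `(1 - f yq) - (1 - f yMAP) ≤ e^δ - 1`. -/
theorem redundancy_misclassification_bound
    {Y : Type*} [Fintype Y] [Nonempty Y]
    (f q : Y → ℝ)
    (hf_nonneg : ∀ y, 0 ≤ f y) (hf_sum : ∑ y, f y = 1)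
    (hq_nonneg : ∀ y, 0 ≤ q y) (hq_sum : ∑ y, q y = 1)
    (hq_pos : ∀ y, 0 < f y → 0 < q y)
    (δ : ℝ)
    (hδ : δ = Finset.univ.sup' Finset.univ_nonempty (fun y => Real.log (f y / q y)))
    (yq : Y) (hyq : ∀ y, q y ≤ q yq)
    (yMAP : Y) (hyMAP : ∀ y, f y ≤ f yMAP) :
    (1 - f yq) - (1 - f yMAP) ≤ Real.exp δ - 1 := by
  classical
  -- Key pointwise bound: f y ≤ e^δ * q y.
  have key : ∀ y, f y ≤ Real.exp δ * q y := by
    intro y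
    rcases eq_or_lt_of_le (hf_nonneg y) with h0 | hpos
    · have : (0:ℝ) ≤ Real.exp δ * q y :=
        mul_nonneg (Real.exp_pos δ).le (hq_nonneg y)
      linarith
    · have hqy := hq_pos y hpos
      have hlog : Real.log (f y / q y) ≤ δ := by
        rw [hδ]
        exact Finset.le_sup' (fun y => Real.log (f y / q y)) (Finset.mem_univ y)
      have := Real.exp_le_exp.mpr hlog
      rw [Real.exp_log (div_pos hpos hqy)] at this
      calc f y = (f y / q y) * q y := by field_simp
        _ ≤ Real.exp δ * q y := by
            exact mul_le_mul_of_nonneg_right this (hq_nonneg y)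
  -- Summing over y ≠ yq : 1 - f yq ≤ e^δ * (1 - q yq).
  have hsumf : ∑ y ∈ Finset.univ.erase yq, f y = 1 - f yq := by
    rw [← hf_sum, Finset.sum_erase_eq_sub (Finset.mem_univ yq)]
  have hsumq : ∑ y ∈ Finset.univ.erase yq, q y = 1 - q yq := by
    rw [← hq_sum, Finset.sum_erase_eq_sub (Finset.mem_univ yq)]
  have hsum : 1 - f yq ≤ Real.exp δ * (1 - q yq) := by
    rw [← hsumf, ← hsumq, Finset.mul_sum]
    exact Finset.sum_le_sum (fun y _ => key y)
  -- f yMAP ≤ e^δ * q yMAP ≤ e^δ * q yq.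
  have hmap : f yMAP ≤ Real.exp δ * q yq :=
    (key yMAP).trans (mul_le_mul_of_nonneg_left (hyq yMAP) (Real.exp_pos δ).le)
  nlinarith [Real.exp_pos δ]
end

section
/- For a nonempty model class M of probability distributions on a finite set Y with Z_M = Σ_{y∈Y} sup_{p∈M} p(y) finite, the normalized maximum likelihood distribution q_NML(y) = sup_{p∈M} p(y) / Z_M achieves maximal regret exactly ln Z_M, i.e., sup_{p∈M} max_{y∈Y} ln(p(y)/q_NML(y)) = ln Z_M. -/
/-- **The NML distribution attains maximal regret `ln Z_M` (stochastic complexity).**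
`M` is a nonempty family of probability mass functions on the finite alphabet `Y`,
`Z = Σ_{y} sup_{p∈M} p y` (finite, as each `p y ≤ 1`), and the normalized maximum
likelihood distribution is `qNML y = (sup_{p∈M} p y) / Z`. Then the maximal regret of
`qNML` relative to `M` equals `ln Z`:
`sup_{p∈M} max_{y} ln (p y / qNML y) = ln Z`. -/
theorem nml_maximal_regret_eq_log_Z
    {Y : Type*} [Fintype Y] [Nonempty Y]
    (M : Set (Y → ℝ)) (hM_ne : M.Nonempty)
    (hM_nonneg : ∀ p ∈ M, ∀ y, 0 ≤ p y) (hM_sum : ∀ p ∈ M, ∑ y, p y = 1)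
    (Z : ℝ) (hZ : Z = ∑ y, ⨆ p : M, (p : Y → ℝ) y)
    (qNML : Y → ℝ) (hqNML : ∀ y, qNML y = (⨆ p : M, (p : Y → ℝ) y) / Z) :
    (⨆ p : M, Finset.univ.sup' Finset.univ_nonempty
        (fun y => Real.log ((p : Y → ℝ) y / qNML y))) = Real.log Z := by
  obtain ⟨p0, hp0⟩ := hM_ne
  haveI : Nonempty M := ⟨⟨p0, hp0⟩⟩
  set s : Y → ℝ := fun y => ⨆ p : M, (p : Y → ℝ) y with hs
  have hbdd : ∀ y, BddAbove (Set.range fun p : M => (p : Y → ℝ) y) := by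
    intro y
    refine ⟨1, ?_⟩
    rintro _ ⟨p, rfl⟩
    calc (p : Y → ℝ) y ≤ ∑ y', (p : Y → ℝ) y' :=
          Finset.single_le_sum (fun i _ => hM_nonneg p p.2 i) (Finset.mem_univ y)
      _ = 1 := hM_sum p p.2
  have hsp : ∀ (p : M) (y : Y), (p : Y → ℝ) y ≤ s y := fun p y => le_ciSup (hbdd y) p
  have hs_nonneg : ∀ y, 0 ≤ s y := fun y =>
    le_trans (hM_nonneg p0 hp0 y) (hsp ⟨p0, hp0⟩ y)
  have hZ1 : (1 : ℝ) ≤ Z := by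
    rw [hZ, ← hM_sum p0 hp0]
    exact Finset.sum_le_sum fun y _ => hsp ⟨p0, hp0⟩ y
  have hZ0 : (0 : ℝ) < Z := lt_of_lt_of_le one_pos hZ1
  have hlogZ : 0 ≤ Real.log Z := Real.log_nonneg hZ1
  -- upper bound per term
  have hupper : ∀ (p : M) (y : Y), Real.log ((p : Y → ℝ) y / qNML y) ≤ Real.log Z := by
    intro p y
    rw [hqNML]
    rcases eq_or_lt_of_le (hs_nonneg y) with h0 | h0
    · have hpy : (p : Y → ℝ) y = 0 :=
        le_antisymm (h0 ▸ hsp p y) (hM_nonneg p p.2 y)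
      rw [hpy]
      simpa using hlogZ
    · have hle : (p : Y → ℝ) y / (s y / Z) ≤ Z := by
        rw [div_div_eq_mul_div, div_le_iff₀ h0]
        calc (p : Y → ℝ) y * Z ≤ s y * Z :=
              mul_le_mul_of_nonneg_right (hsp p y) hZ0.le
          _ = Z * s y := mul_comm _ _
      have hnn : 0 ≤ (p : Y → ℝ) y / (s y / Z) :=
        div_nonneg (hM_nonneg p p.2 y) (div_nonneg h0.le hZ0.le)
      rcases eq_or_lt_of_le hnn with hq0 | hq0
      · rw [← hq0, Real.log_zero]; exact hlogZ
      · exact Real.log_le_log hq0 hle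
  have hSbdd : BddAbove (Set.range fun p : M =>
      Finset.univ.sup' Finset.univ_nonempty
        (fun y => Real.log ((p : Y → ℝ) y / qNML y))) := by
    refine ⟨Real.log Z, ?_⟩
    rintro _ ⟨p, rfl⟩
    exact Finset.sup'_le _ _ fun y _ => hupper p y
  refine le_antisymm (ciSup_le fun p => Finset.sup'_le _ _ fun y _ => hupper p y) ?_
  -- lower bound
  refine le_of_forall_pos_le_add fun ε hε => ?_
  -- pick y0 with s y0 > 0
  have hy0 : ∃ y0, 0 < s y0 := by
    by_contra h
    push_neg at h
    have : Z ≤ 0 := by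
      rw [hZ]
      exact Finset.sum_nonpos fun y _ => h y
    linarith
  obtain ⟨y0, hy0⟩ := hy0
  have hlt : s y0 * Real.exp (-ε) < s y0 := by
    nlinarith [Real.exp_lt_one_iff.mpr (neg_lt_zero.mpr hε), Real.exp_pos (-ε)]
  obtain ⟨p, hp⟩ := exists_lt_of_lt_ciSup (hlt.trans_le (le_refl (s y0)))
  -- hp : s y0 * exp(-ε) < p y0
  have hppos : 0 < (p : Y → ℝ) y0 :=
    lt_of_lt_of_le (mul_pos hy0 (Real.exp_pos _)) hp.le
  have hterm : Real.log Z - ε ≤ Real.log ((p : Y → ℝ) y0 / qNML y0) := by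
    rw [hqNML]
    have hratio : Real.exp (-ε) * Z ≤ (p : Y → ℝ) y0 / (s y0 / Z) := by
      rw [div_div_eq_mul_div, le_div_iff₀ hy0]
      nlinarith [Real.exp_pos (-ε)]
    have := Real.log_le_log (mul_pos (Real.exp_pos _) hZ0) hratio
    rw [Real.log_mul (Real.exp_pos _).ne' hZ0.ne', Real.log_exp] at this
    linarith
  have hmax : Real.log ((p : Y → ℝ) y0 / qNML y0) ≤
      Finset.univ.sup' Finset.univ_nonempty
        (fun y => Real.log ((p : Y → ℝ) y / qNML y)) :=
    Finset.le_sup' (f := fun y => Real.log ((p : Y → ℝ) y / qNML y)) (Finset.mem_univ y0)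
  calc Real.log Z ≤ Real.log ((p : Y → ℝ) y0 / qNML y0) + ε := by linarith
    _ ≤ _ := add_le_add_left (le_ciSup_of_le hSbdd p hmax) ε
end

section
/- The normalized maximum likelihood distribution q_NML(y) = sup_{p∈M} p(y)/Z_M minimizes the maximal regret: for every probability distribution q on Y, sup_{p∈M} max_{y∈Y} ln(p(y)/q(y)) ≥ ln Z_M, with equality for q = q_NML. -/
/-- **The NML distribution minimizes maximal regret.**
`M` is a nonempty family of probability mass functions on the finite alphabet `Y`,
`Z = Σ_y sup_{p∈M} p y`, and `qNML y = (sup_{p∈M} p y) / Z`. Then for every (strictly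
positive) probability distribution `q` on `Y`,
`sup_{p∈M} max_y ln (p y / q y) ≥ ln Z`, and equality holds for `q = qNML`.
(For `q` vanishing at some `y` with `sup_{p∈M} p y > 0` the regret is `+∞`, so strict
positivity is the only nontrivial case.) -/
theorem nml_minimizes_maximal_regret
    {Y : Type*} [Fintype Y] [Nonempty Y]
    (M : Set (Y → ℝ)) (hM_ne : M.Nonempty)
    (hM_nonneg : ∀ p ∈ M, ∀ y, 0 ≤ p y) (hM_sum : ∀ p ∈ M, ∑ y, p y = 1)
    (Z : ℝ) (hZ : Z = ∑ y, ⨆ p : M, (p : Y → ℝ) y)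
    (qNML : Y → ℝ) (hqNML : ∀ y, qNML y = (⨆ p : M, (p : Y → ℝ) y) / Z) :
    (∀ q : Y → ℝ, (∀ y, 0 < q y) → ∑ y, q y = 1 →
      Real.log Z ≤ ⨆ p : M, Finset.univ.sup' Finset.univ_nonempty
        (fun y => Real.log ((p : Y → ℝ) y / q y))) ∧
    (⨆ p : M, Finset.univ.sup' Finset.univ_nonempty
        (fun y => Real.log ((p : Y → ℝ) y / qNML y))) = Real.log Z := by

  classical
  haveI : Nonempty M := hM_ne.to_subtype
  obtain ⟨p₀, hp₀⟩ := hM_ne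
  set s : Y → ℝ := fun y => ⨆ p : M, (p : Y → ℝ) y with hs
  -- basic facts
  have hbdd : ∀ y, BddAbove (Set.range fun p : M => (p : Y → ℝ) y) := by
    intro y
    refine ⟨1, ?_⟩
    rintro _ ⟨p, rfl⟩
    have h1 : (p : Y → ℝ) y ≤ ∑ y', (p : Y → ℝ) y' :=
      Finset.single_le_sum (fun i _ => hM_nonneg p p.2 i) (Finset.mem_univ y)
    rwa [hM_sum p p.2] at h1
  have hps : ∀ (p : M) (y : Y), (p : Y → ℝ) y ≤ s y := fun p y => le_ciSup (hbdd y) p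
  have hs_nonneg : ∀ y, 0 ≤ s y := fun y =>
    le_trans (hM_nonneg p₀ hp₀ y) (hps ⟨p₀, hp₀⟩ y)
  have hZ1 : 1 ≤ Z := by
    rw [hZ, ← hM_sum p₀ hp₀]
    exact Finset.sum_le_sum fun y _ => hps ⟨p₀, hp₀⟩ y
  have hZpos : 0 < Z := lt_of_lt_of_le one_pos hZ1
  have hsZ : ∀ y, s y ≤ Z := by
    intro y
    rw [hZ]
    exact Finset.single_le_sum (fun i _ => hs_nonneg i) (Finset.mem_univ y)
  have hlogZ : 0 ≤ Real.log Z := Real.log_nonneg hZ1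
  constructor
  · -- lower bound for arbitrary q
    intro q hq hqsum
    set f : M → ℝ := fun p => Finset.univ.sup' Finset.univ_nonempty
        (fun y => Real.log ((p : Y → ℝ) y / q y)) with hf
    have hB : BddAbove (Set.range f) := by
      refine ⟨Finset.univ.sup' Finset.univ_nonempty (fun y => max 0 (Real.log (1 / q y))), ?_⟩
      rintro _ ⟨p, rfl⟩
      apply Finset.sup'_le
      intro y _
      rcases eq_or_lt_of_le (hM_nonneg p p.2 y) with h0 | h0
      · have : (p : Y → ℝ) y = 0 := h0.symm
        rw [this, zero_div, Real.log_zero]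
        exact le_trans (le_max_left 0 (Real.log (1 / q y)))
          (Finset.le_sup' (fun y => max 0 (Real.log (1 / q y))) (Finset.mem_univ y))
      · have hpy1 : (p : Y → ℝ) y ≤ 1 := by
          have h1 : (p : Y → ℝ) y ≤ ∑ y', (p : Y → ℝ) y' :=
            Finset.single_le_sum (fun i _ => hM_nonneg p p.2 i) (Finset.mem_univ y)
          rwa [hM_sum p p.2] at h1
        have hlog1 : Real.log ((p : Y → ℝ) y / q y) ≤ Real.log (1 / q y) := by
          apply Real.log_le_log (div_pos h0 (hq y))
          gcongr
          exact (hq y).le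
        exact le_trans (le_trans hlog1 (le_max_right 0 (Real.log (1 / q y))))
          (Finset.le_sup' (fun y => max 0 (Real.log (1 / q y))) (Finset.mem_univ y))
    have hfR : ∀ p : M, f p ≤ ⨆ p : M, f p := fun p => le_ciSup hB p
    set R := ⨆ p : M, f p with hRdef
    have hsq : ∀ y, s y ≤ q y * Real.exp R := by
      intro y
      apply ciSup_le
      intro p
      rcases eq_or_lt_of_le (hM_nonneg p p.2 y) with h0 | h0
      · rw [← h0]; exact mul_nonneg (hq y).le (Real.exp_nonneg _)
      · have h1 : Real.log ((p : Y → ℝ) y / q y) ≤ R := by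
          have hle := Finset.le_sup' (s := Finset.univ)
            (f := fun y => Real.log ((p : Y → ℝ) y / q y)) (Finset.mem_univ y)
          exact hle.trans (hfR p)
        have h2 : (p : Y → ℝ) y / q y ≤ Real.exp R :=
          (Real.log_le_iff_le_exp (div_pos h0 (hq y))).mp h1
        rw [div_le_iff₀ (hq y)] at h2
        linarith [h2]
    have hZle : Z ≤ Real.exp R := by
      calc Z = ∑ y, s y := hZ
        _ ≤ ∑ y, q y * Real.exp R := Finset.sum_le_sum fun y _ => hsq y
        _ = (∑ y, q y) * Real.exp R := by rw [Finset.sum_mul]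
        _ = Real.exp R := by rw [hqsum, one_mul]
    exact (Real.log_le_iff_le_exp hZpos).mpr hZle
  · -- equality for qNML
    set f : M → ℝ := fun p => Finset.univ.sup' Finset.univ_nonempty
        (fun y => Real.log ((p : Y → ℝ) y / qNML y)) with hf
    have hub : ∀ p : M, f p ≤ Real.log Z := by
      intro p
      apply Finset.sup'_le
      intro y _
      rcases eq_or_lt_of_le (hM_nonneg p p.2 y) with h0 | h0
      · rw [← h0, zero_div, Real.log_zero]; exact hlogZ
      · have hsy : 0 < s y := lt_of_lt_of_le h0 (hps p y)
        have hq : qNML y = s y / Z := hqNML y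
        have hqpos : 0 < qNML y := by rw [hq]; positivity
        have hratio : (p : Y → ℝ) y / qNML y ≤ Z := by
          rw [hq, div_div_eq_mul_div, div_le_iff₀ hsy]
          have := hps p y
          nlinarith
        exact Real.log_le_log (by positivity) hratio
    have hB : BddAbove (Set.range f) := ⟨Real.log Z, by rintro _ ⟨p, rfl⟩; exact hub p⟩
    apply le_antisymm (ciSup_le hub)
    -- lower bound via epsilon argument
    obtain ⟨y₀, hy₀⟩ : ∃ y, 0 < s y := by
      by_contra h
      push_neg at h
      have : Z ≤ 0 := hZ ▸ Finset.sum_nonpos fun y _ => h y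
      linarith
    apply le_of_forall_pos_le_add
    intro ε hε
    have hlt : s y₀ * Real.exp (-ε) < s y₀ := by
      have h1 : Real.exp (-ε) < 1 := Real.exp_lt_one_iff.mpr (by linarith)
      nlinarith
    obtain ⟨p, hp⟩ := exists_lt_of_lt_ciSup (show s y₀ * Real.exp (-ε) < s y₀ from hlt)
    have hppos : 0 < (p : Y → ℝ) y₀ := lt_of_le_of_lt (by positivity) hp
    have hq : qNML y₀ = s y₀ / Z := hqNML y₀
    have hratio : Real.exp (-ε) * Z ≤ (p : Y → ℝ) y₀ / qNML y₀ := by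
      rw [hq, div_div_eq_mul_div, le_div_iff₀ hy₀]
      nlinarith [hp.le]
    have hlog : Real.log Z - ε ≤ Real.log ((p : Y → ℝ) y₀ / qNML y₀) := by
      have := Real.log_le_log (by positivity) hratio
      rwa [Real.log_mul (Real.exp_ne_zero _) (ne_of_gt hZpos), Real.log_exp,
        neg_add_eq_sub] at this
    have h1 : Real.log ((p : Y → ℝ) y₀ / qNML y₀) ≤ f p :=
      Finset.le_sup' (fun y => Real.log ((p : Y → ℝ) y / qNML y)) (Finset.mem_univ y₀)
    have h2 : f p ≤ ⨆ p : M, f p := le_ciSup hB p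
    linarith
end

section
/- Combined performance–leakage bound: let f(·|x) be a conditional distribution on a finite set Y, Θ' a nonempty parameter set indexing strictly positive distributions p_θ(·|x), and let h_NML(x) = argmax_y sup_{θ∈Θ'} p_θ(y|x) and h_MAP(x) = argmax_y f(y|x). Then (1 - f(h_NML(x)|x)) - (1 - f(h_MAP(x)|x)) ≤ exp( Δ + L ) - 1, where Δ = inf_{θ∈Θ'} max_{y∈Y} ln(f(y|x)/p_θ(y|x)) and L = ln Σ_{y∈Y} sup_{θ∈Θ'} p_θ(y|x). -/
/-- **Combined performance–leakage bound (Theorem 1 of the paper).**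
`Y` is a finite set of classes; `f` (i.e. `f(·|x)`) is a probability mass function
on `Y`, and `{p θ : θ ∈ Θ'}` (i.e. `p_θ(·|x)`) is a nonempty family of strictly
positive probability mass functions on `Y`. Let `yNML` be a maximizer of
`y ↦ sup_{θ∈Θ'} p θ y` (the NML decision) and `yMAP` a maximizer of `f` (the MAP
decision). With the approximation error `Δ = inf_{θ∈Θ'} max_y ln (f y / p θ y)` and
the maximal leakage `L = ln Σ_y sup_{θ∈Θ'} p θ y`, the misclassification gap
satisfies `(1 - f yNML) - (1 - f yMAP) ≤ exp (Δ + L) - 1`. -/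
theorem nml_performance_leakage_bound
    {T : Type*} {Y : Type*} [Fintype Y] [Nonempty Y]
    (f : Y → ℝ) (hf_nonneg : ∀ y, 0 ≤ f y) (hf_sum : ∑ y, f y = 1)
    (p : T → Y → ℝ)
    (hp_pos : ∀ θ y, 0 < p θ y) (hp_sum : ∀ θ, ∑ y, p θ y = 1)
    (Θ' : Set T) (hΘ' : Θ'.Nonempty)
    (yNML : Y) (hyNML : ∀ y, (⨆ θ : Θ', p θ y) ≤ ⨆ θ : Θ', p θ yNML)
    (yMAP : Y) (hyMAP : ∀ y, f y ≤ f yMAP)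
    (Δ L : ℝ)
    (hΔ : Δ = ⨅ θ : Θ', Finset.univ.sup' Finset.univ_nonempty
        (fun y => Real.log (f y / p θ y)))
    (hL : L = Real.log (∑ y, ⨆ θ : Θ', p θ y)) :
    (1 - f yNML) - (1 - f yMAP) ≤ Real.exp (Δ + L) - 1 := by
  haveI : Nonempty Θ' := hΘ'.to_subtype
  classical
  set g : Y → ℝ := fun y => ⨆ θ : Θ', p θ y with hg
  have hbdd : ∀ y, BddAbove (Set.range fun θ : Θ' => p (θ : T) y) := by
    intro y
    refine ⟨1, ?_⟩
    rintro _ ⟨θ, rfl⟩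
    calc p (θ : T) y ≤ ∑ y', p (θ : T) y' :=
          Finset.single_le_sum (fun y' _ => (hp_pos θ y').le) (Finset.mem_univ y)
      _ = 1 := hp_sum θ
  have hgle : ∀ (θ : Θ') y, p (θ : T) y ≤ g y := fun θ y => le_ciSup (hbdd y) θ
  have hgpos : ∀ y, 0 < g y := by
    intro y
    obtain ⟨θ, hθ⟩ := hΘ'
    exact lt_of_lt_of_le (hp_pos θ y) (hgle ⟨θ, hθ⟩ y)
  set S : ℝ := ∑ y, g y with hS
  have hSpos : 0 < S := Finset.sum_pos (fun y _ => hgpos y) Finset.univ_nonempty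
  have hG0 : 0 ≤ f yMAP - f yNML := sub_nonneg.2 (hyMAP yNML)
  have key : ∀ θ : Θ', Real.log (f yMAP - f yNML + 1) ≤
      (Finset.univ.sup' Finset.univ_nonempty
        (fun y => Real.log (f y / p (θ : T) y))) + L := by
    intro θ
    set D := Finset.univ.sup' Finset.univ_nonempty
      (fun y => Real.log (f y / p (θ : T) y)) with hD
    have hfpD : ∀ y, f y ≤ Real.exp D * p (θ : T) y := by
      intro y
      have hlog : Real.log (f y / p (θ : T) y) ≤ D := by
        rw [hD]
        exact Finset.le_sup' (fun y => Real.log (f y / p (θ : T) y)) (Finset.mem_univ y)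
      rcases eq_or_lt_of_le (hf_nonneg y) with h | h
      · rw [← h]; exact mul_nonneg (Real.exp_pos D).le (hp_pos θ y).le
      · have hdiv : 0 < f y / p (θ : T) y := div_pos h (hp_pos θ y)
        have hexp := Real.exp_le_exp.2 hlog
        rw [Real.exp_log hdiv] at hexp
        have hpy := hp_pos θ y
        calc f y = (f y / p (θ : T) y) * p (θ : T) y := by field_simp
          _ ≤ Real.exp D * p (θ : T) y := by nlinarith
    have hfg : ∀ y, f y ≤ Real.exp D * g y := by
      intro y
      refine (hfpD y).trans ?_
      have := hgle θ y
      nlinarith [Real.exp_pos D]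
    have hsum : f yMAP - f yNML + 1 ≤ Real.exp D * S := by
      have h1 : ∑ y ∈ Finset.univ.erase yNML, f y ≤
          ∑ y ∈ Finset.univ.erase yNML, Real.exp D * g y :=
        Finset.sum_le_sum (fun y _ => hfg y)
      have h2 : ∑ y ∈ Finset.univ.erase yNML, f y = 1 - f yNML := by
        rw [Finset.sum_erase_eq_sub (Finset.mem_univ _), hf_sum]
      have h3 : ∑ y ∈ Finset.univ.erase yNML, Real.exp D * g y
          = Real.exp D * S - Real.exp D * g yNML := by
        rw [← Finset.mul_sum, Finset.sum_erase_eq_sub (Finset.mem_univ _), hS]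
        ring
      have h4 : f yMAP ≤ Real.exp D * g yNML := by
        refine (hfg yMAP).trans ?_
        have := hyNML yMAP
        nlinarith [Real.exp_pos D]
      linarith
    have hpos : 0 < f yMAP - f yNML + 1 := by linarith
    calc Real.log (f yMAP - f yNML + 1) ≤ Real.log (Real.exp D * S) :=
          Real.log_le_log hpos hsum
      _ = D + L := by
          rw [Real.log_mul (Real.exp_ne_zero D) hSpos.ne', Real.log_exp, hL]
  have h5 : Real.log (f yMAP - f yNML + 1) - L ≤
      ⨅ θ : Θ', Finset.univ.sup' Finset.univ_nonempty
        (fun y => Real.log (f y / p (θ : T) y)) :=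
    le_ciInf (fun θ => by linarith [key θ])
  have h6 : Real.log (f yMAP - f yNML + 1) ≤ Δ + L := by rw [hΔ]; linarith
  have h7 : f yMAP - f yNML + 1 ≤ Real.exp (Δ + L) := by
    have := Real.exp_le_exp.2 h6
    rwa [Real.exp_log (by linarith : (0:ℝ) < f yMAP - f yNML + 1)] at this
  linarith
end

section
/- Leakage bound via pointwise differences: enumerating Y = {y₁,…,y_K} and letting θ_k ∈ Θ' achieve sup_{θ∈Θ'} p_θ(y_k|x) for each k, the exponentiated maximal leakage satisfies exp(L(Θ')) = Σ_{k=1}^K p_{θ_k}(y_k|x) ≤ 1 + Σ_{k=2}^K 2 d_TV( p_{θ_k}(·|x), p_{θ₁}(·|x) ) ≤ 1 + Σ_{k=2}^K √( 2 D( p_{θ_k}(·|x) ‖ p_{θ₁}(·|x) ) ). -/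
private lemma logB (s : ℝ) (hs : 1 ≤ s) : Real.log s ≤ (s^2+4*s-5)/(4*s+2) := by
  set F : ℝ → ℝ := fun x => (x^2+4*x-5)/(4*x+2) - Real.log x with hF
  have hder : ∀ x ∈ Set.Ioi (1:ℝ), HasDerivAt F
      (((2*x+4)*(4*x+2) - (x^2+4*x-5)*4)/(4*x+2)^2 - 1/x) x := by
    intro x hx
    have hx0 : (0:ℝ) < x := lt_trans one_pos hx
    have h1 : HasDerivAt (fun x : ℝ => x^2+4*x-5) (2*x+4) x := by
      have := ((hasDerivAt_pow 2 x).add ((hasDerivAt_id x).const_mul 4)).sub_const 5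
      simpa using this
    have h2 : HasDerivAt (fun x : ℝ => 4*x+2) 4 x := by
      simpa using ((hasDerivAt_id x).const_mul 4).add_const 2
    have hne : (4*x+2) ≠ 0 := by positivity
    have := (h1.div h2 hne).sub (Real.hasDerivAt_log hx0.ne')
    rw [one_div]; exact this
  have hmono : MonotoneOn F (Set.Ici 1) := by
    apply monotoneOn_of_deriv_nonneg (convex_Ici 1)
    · apply ContinuousOn.sub
      · apply ContinuousOn.div (by fun_prop) (by fun_prop)
        intro x hx; have : (1:ℝ) ≤ x := hx; positivity
      · exact Real.continuousOn_log.mono (by intro x hx; simp at hx ⊢; linarith)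
    · intro x hx
      rw [interior_Ici] at hx
      exact ((hder x hx).differentiableAt).differentiableWithinAt
    · intro x hx
      rw [interior_Ici] at hx
      rw [(hder x hx).deriv]
      have hx1 : (1:ℝ) < x := hx
      have hx0 : (0:ℝ) < x := lt_trans one_pos hx1
      rw [sub_nonneg, div_le_div_iff₀ hx0 (by positivity)]
      nlinarith [pow_pos hx0 3, sq_nonneg (x-1), sq_nonneg x, mul_pos hx0 hx0]
  have h := hmono (Set.self_mem_Ici) hs hs
  have hF1 : F 1 = 0 := by norm_num [hF]
  rw [hF1] at h
  simpa [hF, sub_nonneg] using h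

private lemma logA (t : ℝ) (ht : 1 ≤ t) : (3*t^2-3)/(t^2+4*t+1) ≤ Real.log t := by
  set F : ℝ → ℝ := fun x => Real.log x - (3*x^2-3)/(x^2+4*x+1) with hF
  have hder : ∀ x ∈ Set.Ioi (1:ℝ), HasDerivAt F
      (1/x - ((6*x)*(x^2+4*x+1) - (3*x^2-3)*(2*x+4))/(x^2+4*x+1)^2) x := by
    intro x hx
    have hx0 : (0:ℝ) < x := lt_trans one_pos hx
    have h1 : HasDerivAt (fun x : ℝ => 3*x^2-3) (6*x) x := by
      have := ((hasDerivAt_pow 2 x).const_mul 3).sub_const 3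
      simpa using this.congr_deriv (by ring)
    have h2 : HasDerivAt (fun x : ℝ => x^2+4*x+1) (2*x+4) x := by
      have := ((hasDerivAt_pow 2 x).add ((hasDerivAt_id x).const_mul 4)).add_const 1
      simpa using this
    have hne : (x^2+4*x+1) ≠ 0 := by positivity
    have := (Real.hasDerivAt_log hx0.ne').sub (h1.div h2 hne)
    rw [one_div]; exact this
  have hmono : MonotoneOn F (Set.Ici 1) := by
    apply monotoneOn_of_deriv_nonneg (convex_Ici 1)
    · apply ContinuousOn.sub
      · exact Real.continuousOn_log.mono (by intro x hx; simp at hx ⊢; linarith)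
      · apply ContinuousOn.div (by fun_prop) (by fun_prop)
        intro x hx; have : (1:ℝ) ≤ x := hx; positivity
    · intro x hx
      rw [interior_Ici] at hx
      exact ((hder x hx).differentiableAt).differentiableWithinAt
    · intro x hx
      rw [interior_Ici] at hx
      rw [(hder x hx).deriv]
      have hx1 : (1:ℝ) < x := hx
      have hx0 : (0:ℝ) < x := lt_trans one_pos hx1
      rw [sub_nonneg, div_le_div_iff₀ (by positivity) hx0]
      nlinarith [pow_pos hx0 4, sq_nonneg (x-1), sq_nonneg ((x-1)^2), mul_pos hx0 hx0]
  have h := hmono (Set.self_mem_Ici) ht ht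
  have hF1 : F 1 = 0 := by norm_num [hF]
  rw [hF1] at h
  simpa [hF, sub_nonneg] using h

private lemma key (t : ℝ) (ht : 0 < t) :
    (t-1) + 3*(t-1)^2/(2*(t+2)) ≤ t * Real.log t := by
  have hL : t - 1 + 3*(t-1)^2/(2*(t+2)) = ((t-1)*(2*(t+2)) + 3*(t-1)^2)/(2*(t+2)) := by
    field_simp
  rcases le_total 1 t with h1 | h1
  · have hA := logA t h1
    have h2 : t * ((3*t^2-3)/(t^2+4*t+1)) ≤ t * Real.log t :=
      mul_le_mul_of_nonneg_left hA ht.le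
    refine le_trans ?_ h2
    have hR : t * ((3*t^2-3)/(t^2+4*t+1)) = (t*(3*t^2-3))/(t^2+4*t+1) := by ring
    rw [hL, hR, div_le_div_iff₀ (by positivity) (by positivity)]
    nlinarith [sq_nonneg ((t-1)^2), sq_nonneg (t-1)]
  · have hB := logB (1/t) (by rw [le_div_iff₀ ht]; linarith)
    have hlog : Real.log t = - Real.log (1/t) := by
      rw [one_div, Real.log_inv]; ring
    have h2 : t * (-( ((1/t)^2+4*(1/t)-5)/(4*(1/t)+2))) ≤ t * Real.log t := by
      rw [hlog]
      exact mul_le_mul_of_nonneg_left (neg_le_neg hB) ht.le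
    refine le_trans ?_ h2
    have hR : t * (-( ((1/t)^2+4*(1/t)-5)/(4*(1/t)+2))) = (5*t^2-4*t-1)/(2*(t+2)) := by
      rw [eq_div_iff (by positivity : (2:ℝ)*(t+2) ≠ 0)]
      have h4 : (4*(1/t)+2) ≠ 0 := by positivity
      field_simp
      ring
    rw [hL, hR]
    have hnum : (t-1)*(2*(t+2)) + 3*(t-1)^2 = 5*t^2-4*t-1 := by ring
    rw [hnum]

private lemma pinsker {Y : Type*} [Fintype Y] (q r : Y → ℝ) (hq : ∀ y, 0 < q y) (hr : ∀ y, 0 < r y)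
    (hq1 : ∑ y, q y = 1) (hr1 : ∑ y, r y = 1) :
    ∑ y, |q y - r y| ≤ Real.sqrt (2 * ∑ y, q y * Real.log (q y / r y)) := by
  have hpt : ∀ y, (q y - r y) + (3/2)*((q y - r y)^2/(q y + 2*r y)) ≤
      q y * Real.log (q y / r y) := by
    intro y
    have hqy := hq y
    have hry := hr y
    have ht : 0 < q y / r y := by positivity
    have h := mul_le_mul_of_nonneg_left (key (q y / r y) ht) (hr y).le
    calc (q y - r y) + (3/2)*((q y - r y)^2/(q y + 2*r y))
        = r y * ((q y / r y - 1) + 3*(q y / r y - 1)^2/(2*(q y / r y + 2))) := by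
          have h2 : q y / r y + 2 ≠ 0 := by positivity
          field_simp
      _ ≤ r y * (q y / r y * Real.log (q y / r y)) := h
      _ = q y * Real.log (q y / r y) := by
          rw [show r y * (q y / r y * Real.log (q y / r y))
            = q y / r y * r y * Real.log (q y / r y) from by ring,
            div_mul_cancel₀ _ hry.ne']
  have hsum : (3/2) * ∑ y, (q y - r y)^2/(q y + 2*r y) ≤
      ∑ y, q y * Real.log (q y / r y) := by
    have h := Finset.sum_le_sum (fun y (_ : y ∈ Finset.univ) => hpt y)
    rw [Finset.sum_add_distrib, Finset.sum_sub_distrib, hq1, hr1, ← Finset.mul_sum] at h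
    linarith
  have hCS : (∑ y, |q y - r y|)^2 ≤ (∑ y, (q y - r y)^2/(q y + 2*r y)) * 3 := by
    have h := Finset.sum_mul_sq_le_sq_mul_sq Finset.univ
      (fun y => |q y - r y| / Real.sqrt (q y + 2*r y)) (fun y => Real.sqrt (q y + 2*r y))
    have e1 : ∀ y : Y, |q y - r y| / Real.sqrt (q y + 2*r y) * Real.sqrt (q y + 2*r y)
        = |q y - r y| := fun y =>
      div_mul_cancel₀ _ (Real.sqrt_ne_zero'.mpr (by have := hq y; have := hr y; linarith))
    have e2 : ∀ y : Y, (|q y - r y| / Real.sqrt (q y + 2*r y))^2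
        = (q y - r y)^2/(q y + 2*r y) := fun y => by
      rw [div_pow, sq_abs, Real.sq_sqrt (by have := hq y; have := hr y; linarith)]
    have e3 : ∀ y : Y, (Real.sqrt (q y + 2*r y))^2 = q y + 2*r y := fun y =>
      Real.sq_sqrt (by have := hq y; have := hr y; linarith)
    simp only [e1, e2, e3] at h
    have e4 : ∑ y, (q y + 2*r y) = 3 := by
      rw [Finset.sum_add_distrib, hq1, ← Finset.mul_sum, hr1]; norm_num
    rwa [e4] at h
  apply Real.le_sqrt_of_sq_le
  nlinarith

/-- **Leakage bound via pointwise differences (first part of the proof of Lemma 1).**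
`Y = {y₁,…,y_K}` is a finite set, enumerated by an equivalence `e : Fin K ≃ Y`
(`y₁ = e 0`). `Θ'` is a nonempty parameter set indexing probability mass functions
`p θ` on `Y`, and for each `k` the supremum `sup_{θ∈Θ'} p θ (e k)` is attained at
`θmax k ∈ Θ'`. With maximal leakage `L(Θ') = ln Σ_y sup_{θ∈Θ'} p θ y`, total
variation distance `d_TV` and KL divergence `D` (in nats), one has the chain
`exp (L(Θ')) = Σ_k p (θmax k) (e k)
  ≤ 1 + Σ_{k≠1} 2 d_TV(p (θmax k), p (θmax 1))
  ≤ 1 + Σ_{k≠1} √(2 D(p (θmax k) ‖ p (θmax 1)))`. -/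
theorem leakage_pointwise_tv_kl_bound
    {T : Type*} {Y : Type*} [Fintype Y] {K : ℕ} [NeZero K] (e : Fin K ≃ Y)
    (p : T → Y → ℝ)
    (hp_nonneg : ∀ θ y, 0 ≤ p θ y) (hp_sum : ∀ θ, ∑ y, p θ y = 1)
    (Θ' : Set T) (hΘ' : Θ'.Nonempty)
    (θmax : Fin K → T) (hθmax_mem : ∀ k, θmax k ∈ Θ')
    (hθmax : ∀ k, ∀ θ ∈ Θ', p θ (e k) ≤ p (θmax k) (e k))
    (hpos : ∀ k y, 0 < p (θmax k) y) :
    Real.exp (Real.log (∑ y, ⨆ θ : Θ', p θ y)) = ∑ k, p (θmax k) (e k) ∧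
    ∑ k, p (θmax k) (e k) ≤
      1 + ∑ k ∈ Finset.univ.erase 0,
        2 * ((1/2) * ∑ y, |p (θmax k) y - p (θmax 0) y|) ∧
    (1 + ∑ k ∈ Finset.univ.erase 0,
        2 * ((1/2) * ∑ y, |p (θmax k) y - p (θmax 0) y|)) ≤
      1 + ∑ k ∈ Finset.univ.erase 0,
        Real.sqrt (2 * ∑ y, p (θmax k) y * Real.log (p (θmax k) y / p (θmax 0) y)) := by
  have hne : Nonempty Θ' := hΘ'.to_subtype
  -- the sup is attained
  have hsup : ∀ y : Y, (⨆ θ : Θ', p θ y) = p (θmax (e.symm y)) y := by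
    intro y
    apply le_antisymm
    · apply ciSup_le
      rintro ⟨θ, hθ⟩
      have h := hθmax (e.symm y) θ hθ
      rwa [e.apply_symm_apply] at h
    · have hbdd : BddAbove (Set.range fun θ : Θ' => p θ.1 y) := by
        refine ⟨p (θmax (e.symm y)) y, ?_⟩
        rintro z ⟨⟨θ, hθ⟩, rfl⟩
        have h := hθmax (e.symm y) θ hθ
        rwa [e.apply_symm_apply] at h
      exact le_ciSup hbdd ⟨θmax (e.symm y), hθmax_mem _⟩
  -- sum identity
  have hsum_eq : (∑ y, ⨆ θ : Θ', p θ y) = ∑ k, p (θmax k) (e k) := by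
    rw [← Equiv.sum_comp e.symm (fun k => p (θmax k) (e k))]
    apply Finset.sum_congr rfl
    intro y _
    rw [hsup y, e.apply_symm_apply]
  have hsum_pos : 0 < ∑ k, p (θmax k) (e k) :=
    Finset.sum_pos (fun k _ => hpos k (e k)) Finset.univ_nonempty
  have hr1 : ∀ θ, ∑ k, p θ (e k) = 1 := fun θ => by
    rw [Equiv.sum_comp e (p θ)]; exact hp_sum θ
  constructor
  · rw [hsum_eq, Real.exp_log hsum_pos]
  constructor
  · have hsplit : ∑ k, p (θmax k) (e k)
        = 1 + ∑ k, (p (θmax k) (e k) - p (θmax 0) (e k)) := by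
      rw [Finset.sum_sub_distrib, hr1 (θmax 0)]; ring
    rw [hsplit]
    have herase : ∑ k, (p (θmax k) (e k) - p (θmax 0) (e k))
        = ∑ k ∈ Finset.univ.erase 0, (p (θmax k) (e k) - p (θmax 0) (e k)) :=
      (Finset.sum_erase _ (by simp)).symm
    rw [herase]
    apply add_le_add_right
    apply Finset.sum_le_sum
    intro k _
    have h1 : p (θmax k) (e k) - p (θmax 0) (e k)
        ≤ |p (θmax k) (e k) - p (θmax 0) (e k)| := le_abs_self _
    have h2 : |p (θmax k) (e k) - p (θmax 0) (e k)|
        ≤ ∑ y, |p (θmax k) y - p (θmax 0) y| :=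
      Finset.single_le_sum (f := fun y => |p (θmax k) y - p (θmax 0) y|)
        (fun y _ => abs_nonneg _) (Finset.mem_univ (e k))
    have h3 : 2 * ((1/2 : ℝ) * ∑ y, |p (θmax k) y - p (θmax 0) y|)
        = ∑ y, |p (θmax k) y - p (θmax 0) y| := by ring
    linarith
  · apply add_le_add_right
    apply Finset.sum_le_sum
    intro k _
    have h3 : 2 * ((1/2 : ℝ) * ∑ y, |p (θmax k) y - p (θmax 0) y|)
        = ∑ y, |p (θmax k) y - p (θmax 0) y| := by ring
    rw [h3]
    exact pinsker _ _ (hpos k) (hpos 0) (hp_sum _) (hp_sum _)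
end

section
/- Fisher-information bound on maximal leakage: if Θ' ⊂ ℝ^d is convex, the Fisher matrix I(θ|x) is well-defined on Θ', and θ_k = argmax_{θ∈Θ'} p_θ(y_k|x) for Y = {y₁,…,y_K}, then L(Θ') ≤ ln( 1 + Σ_{k=2}^K ‖θ_k - θ₁‖ √(σ_max(θ̃_k|x)) ), where for each k, θ̃_k = τ_k θ₁ + (1-τ_k) θ_k for some τ_k ∈ [0,1] and σ_max denotes the largest eigenvalue of the Fisher matrix. -/
/-- The largest eigenvalue of a real symmetric positive semidefinite `d × d` matrix,
characterized as the supremum of the Rayleigh quotient over Euclidean unit vectors. -/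
noncomputable def sigmaMax {d : ℕ} (M : Matrix (Fin d) (Fin d) ℝ) : ℝ :=
  sSup {r : ℝ | ∃ v : EuclideanSpace ℝ (Fin d), ‖v‖ = 1 ∧
    r = dotProduct (fun i => v i) (M.mulVec (fun i => v i))}

/-- **Fisher-information bound on maximal leakage (Lemma 1 of the paper).**
`Y = {y₁,…,y_K}` is a finite set, enumerated by `e : Fin K ≃ Y` (with `y₁ = e 0`);
`{p θ : θ ∈ Θ'}` is a family of strictly positive probability mass functions on `Y`,
twice continuously differentiable in `θ` on the convex set `Θ' ⊆ ℝ^d`, with Fisher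
information matrix `FI` (hypothesis `hFI`), and for each `k` the supremum
`sup_{θ∈Θ'} p θ (e k)` is attained at `θmax k ∈ Θ'`. Then the maximal leakage
`L(Θ') = ln Σ_y sup_{θ∈Θ'} p θ y` satisfies
`L(Θ') ≤ ln (1 + Σ_{k≠1} ‖θmax k - θmax 1‖ √(σ_max(FI θ̃_k)))`,
where `θ̃_k = τ_k • θmax 1 + (1-τ_k) • θmax k` for some `τ_k ∈ [0,1]`. -/
theorem fisher_bound_on_maximal_leakage
    {d : ℕ} {Y : Type*} [Fintype Y] {K : ℕ} [NeZero K] (e : Fin K ≃ Y)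
    (p : EuclideanSpace ℝ (Fin d) → Y → ℝ)
    (Θ' : Set (EuclideanSpace ℝ (Fin d))) (hconv : Convex ℝ Θ') (hne : Θ'.Nonempty)
    (hpos : ∀ θ ∈ Θ', ∀ y, 0 < p θ y) (hsum : ∀ θ ∈ Θ', ∑ y, p θ y = 1)
    (hC2 : ∀ y, ContDiffOn ℝ 2 (fun θ => p θ y) Θ')
    (FI : EuclideanSpace ℝ (Fin d) → Matrix (Fin d) (Fin d) ℝ)
    (hFI : ∀ θ ∈ Θ', ∀ i j, FI θ i j =
      ∑ y, p θ y * (fderivWithin ℝ (fun t => Real.log (p t y)) Θ' θ (WithLp.toLp 2 (Pi.single i 1))) *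
        (fderivWithin ℝ (fun t => Real.log (p t y)) Θ' θ (WithLp.toLp 2 (Pi.single j 1))))
    (θmax : Fin K → EuclideanSpace ℝ (Fin d)) (hθmax_mem : ∀ k, θmax k ∈ Θ')
    (hθmax : ∀ k, ∀ θ ∈ Θ', p θ (e k) ≤ p (θmax k) (e k)) :
    ∃ τ : Fin K → ℝ, (∀ k, τ k ∈ Set.Icc (0 : ℝ) 1) ∧
      Real.log (∑ y, ⨆ θ : Θ', p θ y) ≤
        Real.log (1 + ∑ k ∈ Finset.univ.erase 0,
          ‖θmax k - θmax 0‖ *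
            Real.sqrt (sigmaMax (FI (τ k • θmax 0 + (1 - τ k) • θmax k)))) := by
  classical
  -- p θ y ≤ 1 on Θ'
  have hple1 : ∀ θ ∈ Θ', ∀ y, p θ y ≤ 1 := by
    intro θ hθ y
    rw [← hsum θ hθ]
    exact Finset.single_le_sum (fun y' _ => (hpos θ hθ y').le) (Finset.mem_univ y)
  -- the canonical within-derivative of log p
  set D : EuclideanSpace ℝ (Fin d) → Y → (EuclideanSpace ℝ (Fin d) →L[ℝ] ℝ) :=
    fun θ y => fderivWithin ℝ (fun t => Real.log (p t y)) Θ' θ with hD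
  have hlogdiff : ∀ θ ∈ Θ', ∀ y,
      DifferentiableWithinAt ℝ (fun t => Real.log (p t y)) Θ' θ := by
    intro θ hθ y
    have hf : DifferentiableWithinAt ℝ (fun t => p t y) Θ' θ :=
      ((hC2 y).differentiableOn (by norm_num)) θ hθ
    exact (Real.differentiableAt_log (ne_of_gt (hpos θ hθ y))).comp_differentiableWithinAt θ hf
  -- p itself has within-derivative p θ y • D θ y
  have hpf : ∀ θ ∈ Θ', ∀ y,
      HasFDerivWithinAt (fun t => p t y) (p θ y • D θ y) Θ' θ := by
    intro θ hθ y
    have h1 : HasFDerivWithinAt (fun t => Real.log (p t y)) (D θ y) Θ' θ :=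
      (hlogdiff θ hθ y).hasFDerivWithinAt
    have h2 : HasFDerivWithinAt (fun t => Real.exp (Real.log (p t y)))
        (Real.exp (Real.log (p θ y)) • D θ y) Θ' θ :=
      (Real.hasDerivAt_exp _).comp_hasFDerivWithinAt θ h1
    rw [Real.exp_log (hpos θ hθ y)] at h2
    exact h2.congr (fun t ht => (Real.exp_log (hpos t ht y)).symm)
      (Real.exp_log (hpos θ hθ y)).symm
  -- Rayleigh quotient identity
  have hlin : ∀ (L : EuclideanSpace ℝ (Fin d) →L[ℝ] ℝ) (v : EuclideanSpace ℝ (Fin d)),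
      L v = ∑ i, v i * L (WithLp.toLp 2 (Pi.single i 1)) := by
    intro L v
    have hv : v = ∑ i, v i • (WithLp.toLp 2 (Pi.single i 1) : EuclideanSpace ℝ (Fin d)) := by
      ext j
      simp [Finset.sum_apply, Pi.single_apply]
    conv_lhs => rw [hv]
    rw [map_sum]
    exact Finset.sum_congr rfl fun i _ => by rw [map_smul]; rfl
  have hRayleigh : ∀ θ ∈ Θ', ∀ v : EuclideanSpace ℝ (Fin d),
      dotProduct (fun i => v i) ((FI θ).mulVec (fun i => v i)) =
        ∑ y, p θ y * (D θ y v)^2 := by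
    intro θ hθ v
    have hterm : ∀ y, p θ y * (D θ y v)^2 =
        ∑ i, ∑ j, v i * (p θ y *
          (fderivWithin ℝ (fun t => Real.log (p t y)) Θ' θ) (WithLp.toLp 2 (Pi.single i 1)) *
          (fderivWithin ℝ (fun t => Real.log (p t y)) Θ' θ) (WithLp.toLp 2 (Pi.single j 1)) * v j) := by
      intro y
      rw [hlin (D θ y) v, sq, Finset.sum_mul_sum]
      simp only [Finset.mul_sum, hD]
      exact Finset.sum_congr rfl fun i _ => Finset.sum_congr rfl fun j _ => by ring
    calc dotProduct (fun i => v i) ((FI θ).mulVec (fun i => v i))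
        = ∑ i, ∑ j, ∑ y, v i * (p θ y *
            (fderivWithin ℝ (fun t => Real.log (p t y)) Θ' θ) (WithLp.toLp 2 (Pi.single i 1)) *
            (fderivWithin ℝ (fun t => Real.log (p t y)) Θ' θ) (WithLp.toLp 2 (Pi.single j 1)) * v j) := by
          simp only [dotProduct, Matrix.mulVec, hFI θ hθ, Finset.mul_sum,
            Finset.sum_mul]
      _ = ∑ i, ∑ y, ∑ j, v i * (p θ y *
            (fderivWithin ℝ (fun t => Real.log (p t y)) Θ' θ) (WithLp.toLp 2 (Pi.single i 1)) *
            (fderivWithin ℝ (fun t => Real.log (p t y)) Θ' θ) (WithLp.toLp 2 (Pi.single j 1)) * v j) :=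
          Finset.sum_congr rfl fun i _ => Finset.sum_comm
      _ = ∑ y, ∑ i, ∑ j, v i * (p θ y *
            (fderivWithin ℝ (fun t => Real.log (p t y)) Θ' θ) (WithLp.toLp 2 (Pi.single i 1)) *
            (fderivWithin ℝ (fun t => Real.log (p t y)) Θ' θ) (WithLp.toLp 2 (Pi.single j 1)) * v j) :=
          Finset.sum_comm
      _ = ∑ y, p θ y * (D θ y v)^2 := Finset.sum_congr rfl fun y _ => (hterm y).symm
  -- sigmaMax bounds the Rayleigh quotient of unit vectors
  have hbddA : ∀ θ : EuclideanSpace ℝ (Fin d),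
      BddAbove {r : ℝ | ∃ v : EuclideanSpace ℝ (Fin d), ‖v‖ = 1 ∧
        r = dotProduct (fun i => v i) ((FI θ).mulVec (fun i => v i))} := by
    intro θ
    refine ⟨∑ i, ∑ j, |FI θ i j|, ?_⟩
    rintro r ⟨v, hv, rfl⟩
    have hvi : ∀ i, |v i| ≤ 1 := by
      intro i
      have h1 : (v i)^2 ≤ ∑ j, (v j)^2 :=
        Finset.single_le_sum (fun j _ => sq_nonneg (v j)) (Finset.mem_univ i)
      have h2 : ∑ j, (v j)^2 = 1 := by
        have := EuclideanSpace.norm_eq v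
        rw [hv] at this
        have h3 : Real.sqrt (∑ j, ‖v j‖^2) = 1 := this.symm
        have h4 : (∑ j, ‖v j‖^2) = 1 := Real.sqrt_eq_one.mp h3
        simpa [Real.norm_eq_abs, sq_abs] using h4
      calc |v i| = Real.sqrt ((v i)^2) := (Real.sqrt_sq_eq_abs _).symm
        _ ≤ Real.sqrt 1 := Real.sqrt_le_sqrt (by rw [← h2]; exact h1)
        _ = 1 := Real.sqrt_one
    calc dotProduct (fun i => v i) ((FI θ).mulVec (fun i => v i))
        ≤ |dotProduct (fun i => v i) ((FI θ).mulVec (fun i => v i))| := le_abs_self _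
      _ ≤ ∑ i, |v i * ((FI θ).mulVec (fun i => v i)) i| := Finset.abs_sum_le_sum_abs _ _
      _ ≤ ∑ i, ∑ j, |FI θ i j| := by
          refine Finset.sum_le_sum fun i _ => ?_
          rw [abs_mul]
          calc |v i| * |((FI θ).mulVec (fun i => v i)) i|
              ≤ 1 * |((FI θ).mulVec (fun i => v i)) i| :=
                mul_le_mul_of_nonneg_right (hvi i) (abs_nonneg _)
            _ = |∑ j, FI θ i j * v j| := by rw [one_mul]; rfl
            _ ≤ ∑ j, |FI θ i j * v j| := Finset.abs_sum_le_sum_abs _ _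
            _ ≤ ∑ j, |FI θ i j| := by
                refine Finset.sum_le_sum fun j _ => ?_
                rw [abs_mul]
                calc |FI θ i j| * |v j| ≤ |FI θ i j| * 1 :=
                      mul_le_mul_of_nonneg_left (hvi j) (abs_nonneg _)
                  _ = |FI θ i j| := mul_one _
  -- key gradient bound
  have hgrad : ∀ θ ∈ Θ', ∀ y, ∀ w : EuclideanSpace ℝ (Fin d),
      |p θ y * D θ y w| ≤ Real.sqrt (sigmaMax (FI θ)) * ‖w‖ := by
    intro θ hθ y w
    rcases eq_or_ne w 0 with rfl | hw
    · simp [Real.sqrt_nonneg]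
    · set v : EuclideanSpace ℝ (Fin d) := ‖w‖⁻¹ • w with hvdef
      have hv1 : ‖v‖ = 1 := norm_smul_inv_norm hw
      have hmem : dotProduct (fun i => v i) ((FI θ).mulVec (fun i => v i)) ∈
          {r : ℝ | ∃ v : EuclideanSpace ℝ (Fin d), ‖v‖ = 1 ∧
            r = dotProduct (fun i => v i) ((FI θ).mulVec (fun i => v i))} :=
        ⟨v, hv1, rfl⟩
      have hle : dotProduct (fun i => v i) ((FI θ).mulVec (fun i => v i)) ≤
          sigmaMax (FI θ) := le_csSup (hbddA θ) hmem
      rw [hRayleigh θ hθ v] at hle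
      have hterm : p θ y * (D θ y v)^2 ≤ ∑ y', p θ y' * (D θ y' v)^2 :=
        Finset.single_le_sum (f := fun y' => p θ y' * (D θ y' v)^2)
          (fun y' _ => mul_nonneg (hpos θ hθ y').le (sq_nonneg _)) (Finset.mem_univ y)
      have hsq : (p θ y * D θ y v)^2 ≤ sigmaMax (FI θ) := by
        have h1 : (p θ y * D θ y v)^2 = p θ y * (p θ y * (D θ y v)^2) := by ring
        have h2 : p θ y * (p θ y * (D θ y v)^2) ≤ 1 * (p θ y * (D θ y v)^2) :=
          mul_le_mul_of_nonneg_right (hple1 θ hθ y)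
            (mul_nonneg (hpos θ hθ y).le (sq_nonneg _))
        rw [one_mul] at h2
        linarith
      have habs : |p θ y * D θ y v| ≤ Real.sqrt (sigmaMax (FI θ)) := by
        calc |p θ y * D θ y v| = Real.sqrt ((p θ y * D θ y v)^2) :=
              (Real.sqrt_sq_eq_abs _).symm
          _ ≤ Real.sqrt (sigmaMax (FI θ)) := Real.sqrt_le_sqrt hsq
      have hscale : D θ y w = ‖w‖ * D θ y v := by
        have : (D θ y) v = ‖w‖⁻¹ * (D θ y) w := by
          rw [hvdef, map_smul]; rfl
        rw [this, ← mul_assoc, mul_inv_cancel₀ (norm_ne_zero_iff.mpr hw), one_mul]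
      calc |p θ y * D θ y w| = ‖w‖ * |p θ y * D θ y v| := by
            rw [hscale]
            rw [abs_mul, abs_mul, abs_mul]
            rw [abs_of_nonneg (norm_nonneg w)]
            ring
        _ ≤ ‖w‖ * Real.sqrt (sigmaMax (FI θ)) :=
            mul_le_mul_of_nonneg_left habs (norm_nonneg w)
        _ = Real.sqrt (sigmaMax (FI θ)) * ‖w‖ := mul_comm _ _
  -- Per-k mean value theorem bound
  have key : ∀ k : Fin K, ∃ τ ∈ Set.Icc (0:ℝ) 1,
      p (θmax k) (e k) - p (θmax 0) (e k) ≤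
        ‖θmax k - θmax 0‖ *
          Real.sqrt (sigmaMax (FI (τ • θmax 0 + (1 - τ) • θmax k))) := by
    intro k
    set u : EuclideanSpace ℝ (Fin d) := θmax k - θmax 0 with hu
    set γ : ℝ → EuclideanSpace ℝ (Fin d) := fun t => θmax 0 + t • u with hγ
    have hγmem : ∀ t ∈ Set.Icc (0:ℝ) 1, γ t ∈ Θ' := by
      intro t ht
      have h := hconv (hθmax_mem 0) (hθmax_mem k)
        (by linarith [ht.2] : (0:ℝ) ≤ 1 - t) ht.1 (by ring)
      have heq : (1 - t) • θmax 0 + t • θmax k = γ t := by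
        simp only [hγ, hu]
        module
      rwa [heq] at h
    set h : ℝ → ℝ := fun t => p (γ t) (e k) with hh
    have hderiv : ∀ t ∈ Set.Icc (0:ℝ) 1,
        HasDerivWithinAt h (p (γ t) (e k) * D (γ t) (e k) u) (Set.Icc 0 1) t := by
      intro t ht
      have hγd : HasDerivWithinAt γ u (Set.Icc 0 1) t := by
        have h1 : HasDerivAt (fun s : ℝ => s • u) ((1:ℝ) • u) t :=
          (hasDerivAt_id t).smul_const u
        have h2 : HasDerivAt γ u t := by
          simpa [hγ] using h1.const_add (θmax 0)
        exact h2.hasDerivWithinAt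
      have := (hpf (γ t) (hγmem t ht) (e k)).comp_hasDerivWithinAt t hγd
        (fun s hs => hγmem s hs)
      exact this
    obtain ⟨c, hc, hslope⟩ := exists_hasDerivAt_eq_slope h
      (fun t => p (γ t) (e k) * D (γ t) (e k) u) one_pos
      (fun t ht => ((hderiv t ht).differentiableWithinAt).continuousWithinAt)
      (fun t ht => (hderiv t (Set.Ioo_subset_Icc_self ht)).hasDerivAt
        (Icc_mem_nhds ht.1 ht.2))
    refine ⟨1 - c, ⟨by linarith [hc.2], by linarith [hc.1]⟩, ?_⟩
    have harg : (1 - c) • θmax 0 + (1 - (1 - c)) • θmax k = γ c := by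
      simp only [hγ, hu]
      module
    rw [harg]
    have h1 : h 1 = p (θmax k) (e k) := by
      simp only [hh, hγ, hu, one_smul]
      congr 1
      abel
    have h0 : h 0 = p (θmax 0) (e k) := by
      simp only [hh, hγ, hu, zero_smul, add_zero]
    have hslope' : p (θmax k) (e k) - p (θmax 0) (e k) =
        p (γ c) (e k) * D (γ c) (e k) u := by
      rw [← h1, ← h0]
      rw [hslope]
      norm_num
    rw [hslope']
    calc p (γ c) (e k) * D (γ c) (e k) u ≤ |p (γ c) (e k) * D (γ c) (e k) u| := le_abs_self _
      _ ≤ Real.sqrt (sigmaMax (FI (γ c))) * ‖u‖ :=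
          hgrad (γ c) (hγmem c (Set.Ioo_subset_Icc_self hc)) (e k) u
      _ = ‖θmax k - θmax 0‖ * Real.sqrt (sigmaMax (FI (γ c))) := by rw [hu, mul_comm]
  choose τ hτmem hkey using key
  refine ⟨τ, hτmem, ?_⟩
  -- sup over Θ' is attained
  have hne' : Nonempty Θ' := hne.to_subtype
  have hsup : ∀ k : Fin K, (⨆ θ : Θ', p θ (e k)) = p (θmax k) (e k) := by
    intro k
    apply le_antisymm
    · exact ciSup_le fun θ => hθmax k θ θ.2
    · exact le_ciSup (f := fun θ : Θ' => p θ (e k))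
        ⟨1, by rintro r ⟨θ, rfl⟩; exact hple1 θ θ.2 (e k)⟩ ⟨θmax k, hθmax_mem k⟩
  have hS : ∑ y, (⨆ θ : Θ', p θ y) = ∑ k, p (θmax k) (e k) := by
    rw [← e.sum_comp (fun y => ⨆ θ : Θ', p θ y)]
    exact Finset.sum_congr rfl fun k _ => hsup k
  have hone : ∑ k, p (θmax 0) (e k) = 1 := by
    rw [e.sum_comp (fun y => p (θmax 0) y)]
    exact hsum _ (hθmax_mem 0)
  set T : Fin K → ℝ := fun k => ‖θmax k - θmax 0‖ *
    Real.sqrt (sigmaMax (FI (τ k • θmax 0 + (1 - τ k) • θmax k))) with hT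
  have hsum_le : ∑ k, p (θmax k) (e k) ≤ 1 + ∑ k ∈ Finset.univ.erase 0, T k := by
    have h1 : ∑ k, p (θmax k) (e k) ≤ ∑ k, (p (θmax 0) (e k) + T k) :=
      Finset.sum_le_sum fun k _ => by have := hkey k; simp only [hT]; linarith
    rw [Finset.sum_add_distrib, hone] at h1
    have hT0 : T 0 = 0 := by simp [hT]
    have h2 : ∑ k, T k = ∑ k ∈ Finset.univ.erase 0, T k := by
      rw [← Finset.add_sum_erase _ T (Finset.mem_univ 0), hT0, zero_add]
    linarith
  rw [hS]
  have hpos' : 0 < ∑ k, p (θmax k) (e k) :=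
    Finset.sum_pos (fun k _ => hpos _ (hθmax_mem k) _) ⟨0, Finset.mem_univ 0⟩
  exact Real.log_le_log hpos' hsum_le
end

section
/- Ball-support leakage bound: let Θ' ⊆ ℝ^d be contained in a ball of radius ρ around some point θ̂, so that any two points of Θ' are within distance 2ρ. If the Fisher matrix eigenvalues over the convex hull of Θ' are bounded by σ* = sup_{‖θ-θ̂‖<ρ} σ_max(θ|x), then exp(L(Θ')) ≤ 1 + 2ρ K √(σ*), where K = |Y|. -/
/-- The Rayleigh-quotient set is bounded above. -/
lemma rayleighSet_bddAbove {d : ℕ} (M : Matrix (Fin d) (Fin d) ℝ) :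
    BddAbove {r : ℝ | ∃ v : EuclideanSpace ℝ (Fin d), ‖v‖ = 1 ∧
      r = dotProduct (fun i => v i) (M.mulVec (fun i => v i))} := by
  have hset : {r : ℝ | ∃ v : EuclideanSpace ℝ (Fin d), ‖v‖ = 1 ∧
      r = dotProduct (fun i => v i) (M.mulVec (fun i => v i))} =
      (fun v : EuclideanSpace ℝ (Fin d) =>
        dotProduct (fun i => v i) (M.mulVec (fun i => v i))) ''
        Metric.sphere 0 1 := by
    ext r
    simp only [Set.mem_setOf_eq, Set.mem_image, mem_sphere_zero_iff_norm]
    tauto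
  rw [hset]
  refine ((isCompact_sphere (0 : EuclideanSpace ℝ (Fin d)) 1).image ?_).bddAbove
  have hc : ∀ i : Fin d, Continuous fun v : EuclideanSpace ℝ (Fin d) => v i :=
    fun i => (EuclideanSpace.proj i).continuous
  unfold dotProduct Matrix.mulVec
  continuity

/-- Expansion of a continuous linear functional on Euclidean space in coordinates. -/
lemma clm_eq_sum_coords {d : ℕ} (L : EuclideanSpace ℝ (Fin d) →L[ℝ] ℝ)
    (v : EuclideanSpace ℝ (Fin d)) :
    L v = ∑ i, v i * L (WithLp.toLp 2 (Pi.single i 1)) := by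
  have hvrep : v = ∑ i, v i • (WithLp.toLp 2 (Pi.single i 1) : EuclideanSpace ℝ (Fin d)) := by
    ext j; simp [Finset.sum_apply, Pi.single_apply]
  conv_lhs => rw [hvrep]
  rw [map_sum]
  simp [smul_eq_mul]

/-- **Ball-support leakage bound.** -/
theorem ball_support_leakage_bound
    {d : ℕ} {Y : Type*} [Fintype Y] [Nonempty Y]
    (p : EuclideanSpace ℝ (Fin d) → Y → ℝ)
    (θhat : EuclideanSpace ℝ (Fin d)) (ρ : ℝ) (hρ : 0 < ρ)
    (Θ' : Set (EuclideanSpace ℝ (Fin d))) (hne : Θ'.Nonempty)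
    (hball : Θ' ⊆ Metric.ball θhat ρ)
    (hpos : ∀ θ ∈ Metric.ball θhat ρ, ∀ y, 0 < p θ y)
    (hsum : ∀ θ ∈ Metric.ball θhat ρ, ∑ y, p θ y = 1)
    (hC2 : ∀ y, ContDiffOn ℝ 2 (fun θ => p θ y) (Metric.ball θhat ρ))
    (FI : EuclideanSpace ℝ (Fin d) → Matrix (Fin d) (Fin d) ℝ)
    (hFI : ∀ θ ∈ Metric.ball θhat ρ, ∀ i j, FI θ i j =
      ∑ y, p θ y *
        (fderivWithin ℝ (fun t => Real.log (p t y)) (Metric.ball θhat ρ) θ (WithLp.toLp 2 (Pi.single i 1))) *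
        (fderivWithin ℝ (fun t => Real.log (p t y)) (Metric.ball θhat ρ) θ (WithLp.toLp 2 (Pi.single j 1))))
    (σstar : ℝ) (hσ : ∀ θ ∈ Metric.ball θhat ρ, sigmaMax (FI θ) ≤ σstar)
    (hattain : ∀ y : Y, ∃ θ ∈ Θ', ∀ θ' ∈ Θ', p θ' y ≤ p θ y) :
    Real.exp (Real.log (∑ y, ⨆ θ : Θ', p θ y)) ≤
      1 + 2 * ρ * (Fintype.card Y : ℝ) * Real.sqrt σstar := by
  classical
  set s := Metric.ball θhat ρ with hs
  have hso : IsOpen s := Metric.isOpen_ball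
  have hsc : Convex ℝ s := convex_ball _ _
  have hdiff : ∀ (y : Y), ∀ θ ∈ s, DifferentiableAt ℝ (fun t => p t y) θ := by
    intro y θ hθ
    exact ((hC2 y).differentiableOn (by norm_num)).differentiableAt (hso.mem_nhds hθ)
  have hple : ∀ θ ∈ s, ∀ y : Y, p θ y ≤ 1 := by
    intro θ hθ y
    rw [← hsum θ hθ]
    exact Finset.single_le_sum (fun y' _ => (hpos θ hθ y').le) (Finset.mem_univ y)
  -- operator norm bound on the gradient of `p · y`
  have hop : ∀ (y : Y), ∀ θ ∈ s, ‖fderiv ℝ (fun t => p t y) θ‖ ≤ Real.sqrt σstar := by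
    intro y θ hθ
    have hlog : ∀ y' : Y, fderivWithin ℝ (fun t => Real.log (p t y')) s θ
        = (p θ y')⁻¹ • fderiv ℝ (fun t => p t y') θ := by
      intro y'
      have h1 : HasFDerivAt (fun t => Real.log (p t y'))
          ((p θ y')⁻¹ • fderiv ℝ (fun t => p t y') θ) θ :=
        ((hdiff y' θ hθ).hasFDerivAt).log (ne_of_gt (hpos θ hθ y'))
      rw [fderivWithin_of_isOpen hso hθ, h1.fderiv]
    have hunit : ∀ v : EuclideanSpace ℝ (Fin d), ‖v‖ = 1 →
        ‖fderiv ℝ (fun t => p t y) θ v‖ ≤ Real.sqrt σstar := by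
      intro v hv
      have hray : dotProduct (fun i => v i) ((FI θ).mulVec (fun i => v i))
          = ∑ y', p θ y' *
              (fderivWithin ℝ (fun t => Real.log (p t y')) s θ v)^2 := by
        unfold dotProduct Matrix.mulVec
        calc ∑ i, v i * ∑ j, FI θ i j * v j
            = ∑ i, ∑ j, ∑ y', v i *
                (p θ y' * (fderivWithin ℝ (fun t => Real.log (p t y')) s θ (WithLp.toLp 2 (Pi.single i 1))) *
                  (fderivWithin ℝ (fun t => Real.log (p t y')) s θ (WithLp.toLp 2 (Pi.single j 1))) * v j) := by
              simp only [hFI θ hθ, Finset.sum_mul, Finset.mul_sum]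
          _ = ∑ y', ∑ i, ∑ j, v i *
                (p θ y' * (fderivWithin ℝ (fun t => Real.log (p t y')) s θ (WithLp.toLp 2 (Pi.single i 1))) *
                  (fderivWithin ℝ (fun t => Real.log (p t y')) s θ (WithLp.toLp 2 (Pi.single j 1))) * v j) := by
              exact (Finset.sum_congr rfl fun i _ => Finset.sum_comm).trans Finset.sum_comm
          _ = ∑ y', p θ y' *
              (fderivWithin ℝ (fun t => Real.log (p t y')) s θ v)^2 := by
              refine Finset.sum_congr rfl fun y' _ => ?_
              rw [clm_eq_sum_coords (fderivWithin ℝ (fun t => Real.log (p t y')) s θ) v,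
                sq, Finset.sum_mul_sum]
              simp only [Finset.mul_sum]
              exact Finset.sum_congr rfl fun i _ => Finset.sum_congr rfl fun j _ => by ring
      have hsum_le : ∑ y', p θ y' *
          (fderivWithin ℝ (fun t => Real.log (p t y')) s θ v)^2 ≤ σstar := by
        calc ∑ y', p θ y' * (fderivWithin ℝ (fun t => Real.log (p t y')) s θ v)^2
            = dotProduct (fun i => v i) ((FI θ).mulVec (fun i => v i)) := hray.symm
          _ ≤ sigmaMax (FI θ) := le_csSup (rayleighSet_bddAbove (FI θ)) ⟨v, hv, rfl⟩
          _ ≤ σstar := hσ θ hθ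
      have hterm : p θ y * (fderivWithin ℝ (fun t => Real.log (p t y)) s θ v)^2 ≤ σstar := by
        refine le_trans ?_ hsum_le
        exact Finset.single_le_sum
          (f := fun y' => p θ y' * (fderivWithin ℝ (fun t => Real.log (p t y')) s θ v)^2)
          (fun y' _ => mul_nonneg (hpos θ hθ y').le (sq_nonneg _)) (Finset.mem_univ y)
      have hWv : fderivWithin ℝ (fun t => Real.log (p t y)) s θ v
          = (p θ y)⁻¹ * fderiv ℝ (fun t => p t y) θ v := by
        rw [hlog y]; simp
      have hq : (fderiv ℝ (fun t => p t y) θ v)^2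
          = p θ y * (p θ y * (fderivWithin ℝ (fun t => Real.log (p t y)) s θ v)^2) := by
        have hpne : p θ y ≠ 0 := (hpos θ hθ y).ne'
        rw [hWv]
        field_simp
      have hsq : (fderiv ℝ (fun t => p t y) θ v)^2 ≤ σstar := by
        rw [hq]
        calc p θ y * (p θ y * (fderivWithin ℝ (fun t => Real.log (p t y)) s θ v)^2)
            ≤ p θ y * (fderivWithin ℝ (fun t => Real.log (p t y)) s θ v)^2 :=
              mul_le_of_le_one_left (mul_nonneg (hpos θ hθ y).le (sq_nonneg _)) (hple θ hθ y)
          _ ≤ σstar := hterm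
      calc ‖fderiv ℝ (fun t => p t y) θ v‖
          = Real.sqrt ((fderiv ℝ (fun t => p t y) θ v)^2) := by
            rw [Real.sqrt_sq_eq_abs, Real.norm_eq_abs]
        _ ≤ Real.sqrt σstar := Real.sqrt_le_sqrt hsq
    refine ContinuousLinearMap.opNorm_le_bound _ (Real.sqrt_nonneg _) fun x => ?_
    rcases eq_or_ne x 0 with rfl | hx
    · simp
    · have hxn : (0:ℝ) < ‖x‖ := norm_pos_iff.mpr hx
      have hv1 : ‖(‖x‖⁻¹ • x : EuclideanSpace ℝ (Fin d))‖ = 1 := by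
        rw [norm_smul, norm_inv, norm_norm, inv_mul_cancel₀ hxn.ne']
      have h2 := hunit _ hv1
      have h3 : (fderiv ℝ (fun t => p t y) θ) x
          = ‖x‖ * (fderiv ℝ (fun t => p t y) θ) (‖x‖⁻¹ • x) := by
        rw [map_smul, smul_eq_mul]
        field_simp
      calc ‖(fderiv ℝ (fun t => p t y) θ) x‖
          = ‖x‖ * ‖(fderiv ℝ (fun t => p t y) θ) (‖x‖⁻¹ • x)‖ := by
            rw [h3, norm_mul, norm_norm]
        _ ≤ ‖x‖ * Real.sqrt σstar := mul_le_mul_of_nonneg_left h2 hxn.le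
        _ = Real.sqrt σstar * ‖x‖ := mul_comm _ _
  -- Lipschitz estimate on the ball
  have hlip : ∀ (y : Y), ∀ θ₁ ∈ s, ∀ θ₂ ∈ s,
      p θ₁ y - p θ₂ y ≤ Real.sqrt σstar * (2 * ρ) := by
    intro y θ₁ hθ₁ θ₂ hθ₂
    have h1 : ‖p θ₁ y - p θ₂ y‖ ≤ Real.sqrt σstar * ‖θ₁ - θ₂‖ :=
      hsc.norm_image_sub_le_of_norm_fderiv_le (fun x hx => hdiff y x hx)
        (fun x hx => hop y x hx) hθ₂ hθ₁
    have h2 : ‖θ₁ - θ₂‖ ≤ 2 * ρ := by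
      have := dist_triangle θ₁ θhat θ₂
      rw [← dist_eq_norm]
      calc dist θ₁ θ₂ ≤ dist θ₁ θhat + dist θhat θ₂ := dist_triangle _ _ _
        _ ≤ ρ + ρ := by
            have ha : dist θ₁ θhat < ρ := Metric.mem_ball.mp hθ₁
            have hb : dist θ₂ θhat < ρ := Metric.mem_ball.mp hθ₂
            rw [dist_comm θhat θ₂]
            linarith
        _ = 2 * ρ := by ring
    calc p θ₁ y - p θ₂ y ≤ |p θ₁ y - p θ₂ y| := le_abs_self _
      _ = ‖p θ₁ y - p θ₂ y‖ := (Real.norm_eq_abs _).symm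
      _ ≤ Real.sqrt σstar * ‖θ₁ - θ₂‖ := h1
      _ ≤ Real.sqrt σstar * (2 * ρ) :=
          mul_le_mul_of_nonneg_left h2 (Real.sqrt_nonneg _)
  -- identify the suprema
  obtain ⟨θ0, hθ0⟩ := hne
  have hΘne : Nonempty Θ' := ⟨⟨θ0, hθ0⟩⟩
  have hsupeq : ∀ y : Y, ∃ θy ∈ Θ', (⨆ θ : Θ', p θ y) = p θy y := by
    intro y
    obtain ⟨θy, hθy, hmax⟩ := hattain y
    refine ⟨θy, hθy, le_antisymm (ciSup_le fun t => hmax t t.2) ?_⟩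
    refine le_ciSup_of_le ⟨p θy y, ?_⟩ ⟨θy, hθy⟩ le_rfl
    rintro r ⟨t, rfl⟩
    exact hmax t t.2
  choose θy hθymem hθysup using hsupeq
  have hXpos : 0 < ∑ y, ⨆ θ : Θ', p θ y := by
    refine Finset.sum_pos (fun y _ => ?_) Finset.univ_nonempty
    rw [hθysup y]
    exact hpos _ (hball (hθymem y)) y
  rw [Real.exp_log hXpos]
  have hbound : ∑ y, ⨆ θ : Θ', p θ y ≤
      ∑ y, (p θ0 y + Real.sqrt σstar * (2 * ρ)) := by
    refine Finset.sum_le_sum fun y _ => ?_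
    rw [hθysup y]
    have := hlip y (θy y) (hball (hθymem y)) θ0 (hball hθ0)
    linarith
  calc ∑ y, ⨆ θ : Θ', p θ y
      ≤ ∑ y, (p θ0 y + Real.sqrt σstar * (2 * ρ)) := hbound
    _ = 1 + (Fintype.card Y : ℝ) * (Real.sqrt σstar * (2 * ρ)) := by
        rw [Finset.sum_add_distrib, hsum θ0 (hball hθ0), Finset.sum_const,
          Finset.card_univ, nsmul_eq_mul]
    _ = 1 + 2 * ρ * (Fintype.card Y : ℝ) * Real.sqrt σstar := by ring
end

section
/- Well-specified performance bound: assume f(·|x) = p_{θ₀}(·|x) for some θ₀ ∈ Θ', where Θ' ⊂ ℝ^d is a convex set of diameter at most 2ρ on which the parametric family is smooth and strictly positive, with Fisher eigenvalues bounded by σ*. Then the NML hypothesis h_NML(x) = argmax_y sup_{θ∈Θ'} p_θ(y|x) satisfies (1 - f(h_NML(x)|x)) - (1 - max_y f(y|x)) ≤ 2ρ K √(σ*), where K = |Y|. -/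
lemma rayleigh_le_sigmaMax {d : ℕ} (M : Matrix (Fin d) (Fin d) ℝ)
    {v : EuclideanSpace ℝ (Fin d)} (hv : ‖v‖ = 1) :
    dotProduct (fun i => v i) (M.mulVec (fun i => v i)) ≤ sigmaMax M := by
  refine le_csSup ?_ ⟨v, hv, rfl⟩
  have hQ : Continuous fun w : EuclideanSpace ℝ (Fin d) =>
      dotProduct (fun i => w i) (M.mulVec (fun i => w i)) := by
    simp only [dotProduct, Matrix.mulVec]
    exact continuous_finset_sum _ fun i _ =>
      ((continuous_apply i).comp (PiLp.continuous_ofLp 2 _)).mul (continuous_finset_sum _ fun j _ =>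
        continuous_const.mul ((continuous_apply j).comp (PiLp.continuous_ofLp 2 _)))
  have hc := ((isCompact_sphere (0 : EuclideanSpace ℝ (Fin d)) 1).image hQ).bddAbove
  refine hc.mono ?_
  rintro r ⟨w, hw, rfl⟩
  exact ⟨w, by simpa using hw, rfl⟩

lemma directional_bound
    {d : ℕ} {Y : Type*} [Fintype Y]
    (p : EuclideanSpace ℝ (Fin d) → Y → ℝ)
    (Θ' : Set (EuclideanSpace ℝ (Fin d)))
    (hpos : ∀ θ ∈ Θ', ∀ y, 0 < p θ y) (hsum : ∀ θ ∈ Θ', ∑ y, p θ y = 1)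
    (hC2 : ∀ y, ContDiffOn ℝ 2 (fun θ => p θ y) Θ')
    (FI : EuclideanSpace ℝ (Fin d) → Matrix (Fin d) (Fin d) ℝ)
    (hFI : ∀ θ ∈ Θ', ∀ i j, FI θ i j =
      ∑ y, p θ y * (fderivWithin ℝ (fun t => Real.log (p t y)) Θ' θ (WithLp.toLp 2 (Pi.single i 1))) *
        (fderivWithin ℝ (fun t => Real.log (p t y)) Θ' θ (WithLp.toLp 2 (Pi.single j 1))))
    (σstar : ℝ) (hσ : ∀ θ ∈ Θ', sigmaMax (FI θ) ≤ σstar)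
    {θ : EuclideanSpace ℝ (Fin d)} (hθ : θ ∈ Θ')
    {w : EuclideanSpace ℝ (Fin d)} (hw : w ∈ tangentConeAt ℝ Θ' θ) (y : Y) :
    |fderivWithin ℝ (fun t => p t y) Θ' θ w| ≤ Real.sqrt σstar * ‖w‖ := by
  rcases eq_or_ne w 0 with rfl | hw0
  · simp [Real.sqrt_nonneg]
  set L : Y → (EuclideanSpace ℝ (Fin d) →L[ℝ] ℝ) :=
    fun y => fderivWithin ℝ (fun t => p t y) Θ' θ with hL
  set G : Y → (EuclideanSpace ℝ (Fin d) →L[ℝ] ℝ) :=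
    fun y => fderivWithin ℝ (fun t => Real.log (p t y)) Θ' θ with hG
  have hdiff : ∀ y, DifferentiableWithinAt ℝ (fun t => p t y) Θ' θ :=
    fun y => (hC2 y).differentiableOn (by norm_num) θ hθ
  have hlog : ∀ y, HasFDerivWithinAt (fun t => Real.log (p t y)) ((p θ y)⁻¹ • L y) Θ' θ :=
    fun y => (hdiff y).hasFDerivWithinAt.log (hpos θ hθ y).ne'
  have hrel : ∀ z : Y, L z w = p θ z * G z w := by
    intro z
    have h2 : HasFDerivWithinAt (fun t => Real.log (p t z)) (G z) Θ' θ :=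
      (hlog z).differentiableWithinAt.hasFDerivWithinAt
    have h3 := h2.unique_on (hlog z) hw
    have : G z w = (p θ z)⁻¹ * (L z w) := by simpa using h3
    rw [this, mul_inv_cancel_left₀ (hpos θ hθ z).ne']
  set v : EuclideanSpace ℝ (Fin d) := ‖w‖⁻¹ • w with hv
  have hwpos : (0:ℝ) < ‖w‖ := norm_pos_iff.mpr hw0
  have hvnorm : ‖v‖ = 1 := by
    rw [hv, norm_smul]
    simp [abs_of_nonneg (inv_nonneg.mpr hwpos.le), inv_mul_cancel₀ hwpos.ne']
  have hGwv : ∀ z : Y, G z w = ‖w‖ * G z v := by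
    intro z
    rw [hv, map_smul]
    simp [smul_eq_mul]
    field_simp
  have hvsum : ∀ z : Y, G z v = ∑ i, v i * G z (WithLp.toLp 2 (Pi.single i 1)) := by
    intro z
    have hexp : v = ∑ i, v i • (WithLp.toLp 2 (Pi.single i 1) : EuclideanSpace ℝ (Fin d)) := by
      ext j
      simp [Finset.sum_apply, Pi.single_apply]
    conv_lhs => rw [hexp]
    rw [map_sum]
    simp [smul_eq_mul]
  have hray : dotProduct (fun i => v i) ((FI θ).mulVec (fun i => v i))
      = ∑ z, p θ z * (G z v * G z v) := by
    simp only [dotProduct, Matrix.mulVec]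
    calc ∑ i, v i * ∑ j, FI θ i j * v j
        = ∑ i, ∑ j, ∑ z, v i * (p θ z * G z (WithLp.toLp 2 (Pi.single i 1)) * G z (WithLp.toLp 2 (Pi.single j 1)) * v j) := by
          refine Finset.sum_congr rfl fun i _ => ?_
          rw [Finset.mul_sum]
          refine Finset.sum_congr rfl fun j _ => ?_
          rw [hFI θ hθ i j, Finset.sum_mul, Finset.mul_sum]
      _ = ∑ i, ∑ z, ∑ j, v i * (p θ z * G z (WithLp.toLp 2 (Pi.single i 1)) * G z (WithLp.toLp 2 (Pi.single j 1)) * v j) :=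
          Finset.sum_congr rfl fun i _ => Finset.sum_comm
      _ = ∑ z, ∑ i, ∑ j, v i * (p θ z * G z (WithLp.toLp 2 (Pi.single i 1)) * G z (WithLp.toLp 2 (Pi.single j 1)) * v j) :=
          Finset.sum_comm
      _ = ∑ z, p θ z * (G z v * G z v) := by
          refine Finset.sum_congr rfl fun z _ => ?_
          rw [hvsum z, Finset.sum_mul_sum]
          rw [Finset.mul_sum]
          refine Finset.sum_congr rfl fun i _ => ?_
          rw [Finset.mul_sum]
          refine Finset.sum_congr rfl fun j _ => ?_
          ring
  have hsum_le : ∑ z, p θ z * (G z v * G z v) ≤ σstar := by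
    calc ∑ z, p θ z * (G z v * G z v)
        = dotProduct (fun i => v i) ((FI θ).mulVec (fun i => v i)) := hray.symm
      _ ≤ sigmaMax (FI θ) := rayleigh_le_sigmaMax _ hvnorm
      _ ≤ σstar := hσ θ hθ
  have hsingle : p θ y * (G y v * G y v) ≤ σstar := by
    refine le_trans (Finset.single_le_sum (f := fun z => p θ z * (G z v * G z v))
      (fun z _ => mul_nonneg (hpos θ hθ z).le (mul_self_nonneg _)) (Finset.mem_univ y)) hsum_le
  have hp1 : p θ y ≤ 1 := by
    rw [← hsum θ hθ]
    exact Finset.single_le_sum (fun z _ => (hpos θ hθ z).le) (Finset.mem_univ y)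
  have h0 : 0 ≤ p θ y * (G y v * G y v) :=
    mul_nonneg (hpos θ hθ y).le (mul_self_nonneg _)
  have hσ0 : 0 ≤ σstar := h0.trans hsingle
  have hsq : (p θ y * G y v) ^ 2 ≤ σstar := by
    nlinarith [hsingle, hp1, (hpos θ hθ y).le, mul_self_nonneg (G y v)]
  have habs : |p θ y * G y v| ≤ Real.sqrt σstar := Real.abs_le_sqrt hsq
  calc |L y w| = |p θ y * G y w| := by rw [hrel y]
    _ = ‖w‖ * |p θ y * G y v| := by
        rw [hGwv y, abs_mul, abs_mul, abs_of_nonneg hwpos.le, abs_mul]; ring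
    _ ≤ ‖w‖ * Real.sqrt σstar := mul_le_mul_of_nonneg_left habs hwpos.le
    _ = Real.sqrt σstar * ‖w‖ := mul_comm _ _

lemma mvt_bound
    {d : ℕ} {Y : Type*} [Fintype Y]
    (p : EuclideanSpace ℝ (Fin d) → Y → ℝ)
    (Θ' : Set (EuclideanSpace ℝ (Fin d))) (hconv : Convex ℝ Θ')
    (hpos : ∀ θ ∈ Θ', ∀ y, 0 < p θ y) (hsum : ∀ θ ∈ Θ', ∑ y, p θ y = 1)
    (hC2 : ∀ y, ContDiffOn ℝ 2 (fun θ => p θ y) Θ')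
    (FI : EuclideanSpace ℝ (Fin d) → Matrix (Fin d) (Fin d) ℝ)
    (hFI : ∀ θ ∈ Θ', ∀ i j, FI θ i j =
      ∑ y, p θ y * (fderivWithin ℝ (fun t => Real.log (p t y)) Θ' θ (WithLp.toLp 2 (Pi.single i 1))) *
        (fderivWithin ℝ (fun t => Real.log (p t y)) Θ' θ (WithLp.toLp 2 (Pi.single j 1))))
    (σstar : ℝ) (hσ : ∀ θ ∈ Θ', sigmaMax (FI θ) ≤ σstar)
    {θ₀ θ₁ : EuclideanSpace ℝ (Fin d)} (hθ₀ : θ₀ ∈ Θ') (hθ₁ : θ₁ ∈ Θ') (y : Y) :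
    p θ₁ y - p θ₀ y ≤ Real.sqrt σstar * ‖θ₁ - θ₀‖ := by
  set u : EuclideanSpace ℝ (Fin d) := θ₁ - θ₀ with hu
  set γ : ℝ → EuclideanSpace ℝ (Fin d) := fun t => θ₀ + t • u with hγdef
  have hmem : ∀ t ∈ Set.Icc (0:ℝ) 1, γ t ∈ Θ' := by
    intro t ht
    have h : γ t = (1 - t) • θ₀ + t • θ₁ := by
      rw [hγdef]
      simp only [hu, smul_sub, sub_smul, one_smul]
      abel
    rw [h]
    exact hconv hθ₀ hθ₁ (by linarith [ht.2]) ht.1 (by ring)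
  have hderiv : ∀ t ∈ Set.Icc (0:ℝ) 1,
      HasDerivWithinAt (fun t => p (γ t) y)
        (fderivWithin ℝ (fun s => p s y) Θ' (γ t) u) (Set.Icc 0 1) t := by
    intro t ht
    have hγ : HasDerivWithinAt γ u (Set.Icc 0 1) t := by
      have : HasDerivAt γ u t := by
        simpa [hγdef] using ((hasDerivAt_id t).smul_const u).const_add θ₀
      exact this.hasDerivWithinAt
    have hp : HasFDerivWithinAt (fun s => p s y)
        (fderivWithin ℝ (fun s => p s y) Θ' (γ t)) Θ' (γ t) :=
      ((hC2 y).differentiableOn (by norm_num) _ (hmem t ht)).hasFDerivWithinAt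
    exact hp.comp_hasDerivWithinAt t hγ hmem
  have hbound : ∀ t ∈ Set.Ico (0:ℝ) 1,
      ‖fderivWithin ℝ (fun s => p s y) Θ' (γ t) u‖ ≤ Real.sqrt σstar * ‖u‖ := by
    intro t ht
    have h1t : (0:ℝ) < 1 - t := by linarith [ht.2]
    have hseg : segment ℝ (γ t) θ₁ ⊆ Θ' :=
      hconv.segment_subset (hmem t ⟨ht.1, ht.2.le⟩) hθ₁
    have hcone : θ₁ - γ t ∈ tangentConeAt ℝ Θ' (γ t) :=
      mem_tangentConeAt_of_segment_subset hseg
    have heq : θ₁ - γ t = (1 - t) • u := by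
      rw [hγdef]
      simp only [hu, smul_sub, sub_smul, one_smul]
      abel
    rw [heq] at hcone
    have := directional_bound p Θ' hpos hsum hC2 FI hFI σstar hσ
      (hmem t ⟨ht.1, ht.2.le⟩) hcone y
    rw [map_smul, smul_eq_mul, abs_mul, abs_of_pos h1t, norm_smul,
      Real.norm_eq_abs, abs_of_pos h1t] at this
    have h2 : |fderivWithin ℝ (fun s => p s y) Θ' (γ t) u| ≤ Real.sqrt σstar * ‖u‖ := by
      have := (mul_le_mul_iff_right₀ h1t).mp (by linarith [this] :
        (1 - t) * |fderivWithin ℝ (fun s => p s y) Θ' (γ t) u| ≤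
          (1 - t) * (Real.sqrt σstar * ‖u‖))
      exact this
    simpa [Real.norm_eq_abs] using h2
  have key := norm_image_sub_le_of_norm_deriv_le_segment' hderiv hbound 1
    (Set.right_mem_Icc.mpr zero_le_one)
  have hγ1 : γ 1 = θ₁ := by rw [hγdef]; simp [hu]
  have hγ0 : γ 0 = θ₀ := by rw [hγdef]; simp
  rw [hγ1, hγ0] at key
  simp only [Real.norm_eq_abs, sub_zero, mul_one] at key
  calc p θ₁ y - p θ₀ y ≤ |p θ₁ y - p θ₀ y| := le_abs_self _
    _ ≤ Real.sqrt σstar * ‖u‖ := key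

/-- **Well-specified performance bound.** `Y` is a finite set with `|Y| = K`;
`{p θ : θ ∈ Θ'}` is a smooth family of strictly positive probability mass functions
on `Y`, where `Θ' ⊆ ℝ^d` is convex of diameter at most `2ρ` and contains the true
parameter `θ₀` (so `f(·|x) = p θ₀` and the approximation error `Δ` vanishes).
The Fisher information matrix `FI` (hypothesis `hFI`) has largest eigenvalue bounded
by `σ*` on `Θ'`, and the suprema over `Θ'` are attained. Then the NML decision
`yNML`, a maximizer of `y ↦ sup_{θ∈Θ'} p θ y`, satisfies
`(1 - p θ₀ yNML) - (1 - max_y p θ₀ y) ≤ 2ρK√(σ*)`. -/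
theorem well_specified_nml_performance_bound
    {d : ℕ} {Y : Type*} [Fintype Y] [Nonempty Y]
    (p : EuclideanSpace ℝ (Fin d) → Y → ℝ)
    (Θ' : Set (EuclideanSpace ℝ (Fin d))) (hconv : Convex ℝ Θ')
    (ρ : ℝ) (hρ : 0 < ρ)
    (hdiam : ∀ θ₁ ∈ Θ', ∀ θ₂ ∈ Θ', ‖θ₁ - θ₂‖ ≤ 2 * ρ)
    (θ₀ : EuclideanSpace ℝ (Fin d)) (hθ₀ : θ₀ ∈ Θ')
    (hpos : ∀ θ ∈ Θ', ∀ y, 0 < p θ y) (hsum : ∀ θ ∈ Θ', ∑ y, p θ y = 1)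
    (hC2 : ∀ y, ContDiffOn ℝ 2 (fun θ => p θ y) Θ')
    (FI : EuclideanSpace ℝ (Fin d) → Matrix (Fin d) (Fin d) ℝ)
    (hFI : ∀ θ ∈ Θ', ∀ i j, FI θ i j =
      ∑ y, p θ y * (fderivWithin ℝ (fun t => Real.log (p t y)) Θ' θ (WithLp.toLp 2 (Pi.single i 1))) *
        (fderivWithin ℝ (fun t => Real.log (p t y)) Θ' θ (WithLp.toLp 2 (Pi.single j 1))))
    (σstar : ℝ) (hσ : ∀ θ ∈ Θ', sigmaMax (FI θ) ≤ σstar)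
    (hattain : ∀ y : Y, ∃ θ ∈ Θ', ∀ θ' ∈ Θ', p θ' y ≤ p θ y)
    (yNML : Y) (hyNML : ∀ y, (⨆ θ : Θ', p θ y) ≤ ⨆ θ : Θ', p θ yNML) :
    (1 - p θ₀ yNML) -
        (1 - Finset.univ.sup' Finset.univ_nonempty (p θ₀)) ≤
      2 * ρ * (Fintype.card Y : ℝ) * Real.sqrt σstar := by
  classical
  choose θm hθm hθmax using hattain
  haveI : Nonempty Θ' := ⟨⟨θ₀, hθ₀⟩⟩
  have hsup : ∀ y : Y, (⨆ θ : Θ', p θ y) = p (θm y) y := by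
    intro y
    refine le_antisymm (ciSup_le fun θ => hθmax y θ.1 θ.2) ?_
    refine le_ciSup_of_le ?_ ⟨θm y, hθm y⟩ le_rfl
    exact ⟨p (θm y) y, by rintro r ⟨θ, rfl⟩; exact hθmax y θ.1 θ.2⟩
  have hNM : ∀ y : Y, p (θm y) y ≤ p (θm yNML) yNML := by
    intro y
    have := hyNML y
    rwa [hsup y, hsup yNML] at this
  have hdy : ∀ y : Y, p (θm y) y - p θ₀ y ≤ Real.sqrt σstar * (2 * ρ) := by
    intro y
    calc p (θm y) y - p θ₀ y
        ≤ Real.sqrt σstar * ‖θm y - θ₀‖ :=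
          mvt_bound p Θ' hconv hpos hsum hC2 FI hFI σstar hσ hθ₀ (hθm y) y
      _ ≤ Real.sqrt σstar * (2 * ρ) :=
          mul_le_mul_of_nonneg_left (hdiam (θm y) (hθm y) θ₀ hθ₀) (Real.sqrt_nonneg _)
  have hnonneg : ∀ y : Y, 0 ≤ p (θm y) y - p θ₀ y :=
    fun y => sub_nonneg.mpr (hθmax y θ₀ hθ₀)
  have hsup' : Finset.univ.sup' Finset.univ_nonempty (p θ₀) ≤ p (θm yNML) yNML :=
    Finset.sup'_le _ _ fun y _ => (hθmax y θ₀ hθ₀).trans (hNM y)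
  have hstep : p (θm yNML) yNML - p θ₀ yNML ≤ ∑ y, (p (θm y) y - p θ₀ y) :=
    Finset.single_le_sum (f := fun y => p (θm y) y - p θ₀ y)
      (fun y _ => hnonneg y) (Finset.mem_univ yNML)
  have hsumle : ∑ y, (p (θm y) y - p θ₀ y) ≤
      (Fintype.card Y : ℝ) * (Real.sqrt σstar * (2 * ρ)) := by
    have := Finset.sum_le_card_nsmul Finset.univ (fun y => p (θm y) y - p θ₀ y)
      (Real.sqrt σstar * (2 * ρ)) (fun y _ => hdy y)
    simpa [nsmul_eq_mul, Finset.card_univ] using this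
  have : (1 - p θ₀ yNML) - (1 - Finset.univ.sup' Finset.univ_nonempty (p θ₀))
      = Finset.univ.sup' Finset.univ_nonempty (p θ₀) - p θ₀ yNML := by ring
  rw [this]
  calc Finset.univ.sup' Finset.univ_nonempty (p θ₀) - p θ₀ yNML
      ≤ p (θm yNML) yNML - p θ₀ yNML := by linarith [hsup']
    _ ≤ ∑ y, (p (θm y) y - p θ₀ y) := hstep
    _ ≤ (Fintype.card Y : ℝ) * (Real.sqrt σstar * (2 * ρ)) := hsumle
    _ = 2 * ρ * (Fintype.card Y : ℝ) * Real.sqrt σstar := by ring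
end

section
/- Averaged (heuristic) bound via trace: under the conditions of the well-specified bound holding for each x, and with T(θ|x) the trace of the Fisher matrix satisfying σ_max(θ|x) ≤ T(θ|x), the averaged performance gap satisfies E_X[ E(h_NML; X, z^n) ] − E_X[ E(h_MAP; X) ] ≤ 2ρK √( E_X[ T*(X) ] ), where T*(x) bounds T(θ|x) on Θ'. -/
/-- **Averaged (heuristic) performance bound via the Fisher trace.**
`Y` is a finite class set with `|Y| = K`, `X` an observation space carrying the
marginal probability measure `μ`. For each `x`, `{p θ x : θ ∈ Θ'}` is a smooth family
of strictly positive conditional probability mass functions `p_θ(·|x)` on `Y`, with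
`Θ' ⊆ ℝ^d` convex of diameter at most `2ρ` containing the true parameter `θ₀` (so
`f(·|x) = p θ₀ x` for every `x`). `FI θ x` is the Fisher information matrix
(hypothesis `hFI`), whose trace `T(θ|x)` dominates its largest eigenvalue
(hypothesis `hσT`) and is bounded on `Θ'` by `T*(x)` (hypothesis `hT`).
`hNML` is the NML decision rule (maximizing `y ↦ sup_{θ∈Θ'} p θ x y` at each `x`)
and `hMAP` the MAP rule (maximizing `p θ₀ x`). Then the averaged misclassification
gap satisfies
`E_X[1 - p θ₀ X (hNML X)] - E_X[1 - p θ₀ X (hMAP X)] ≤ 2ρK√(E_X[T*(X)])`. -/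
theorem averaged_nml_performance_bound
    {d : ℕ} {Y : Type*} [Fintype Y] [Nonempty Y]
    {X : Type*} [MeasurableSpace X] (μ : MeasureTheory.Measure X)
    [MeasureTheory.IsProbabilityMeasure μ]
    (p : EuclideanSpace ℝ (Fin d) → X → Y → ℝ)
    (Θ' : Set (EuclideanSpace ℝ (Fin d))) (hconv : Convex ℝ Θ')
    (ρ : ℝ) (hρ : 0 < ρ)
    (hdiam : ∀ θ₁ ∈ Θ', ∀ θ₂ ∈ Θ', ‖θ₁ - θ₂‖ ≤ 2 * ρ)
    (θ₀ : EuclideanSpace ℝ (Fin d)) (hθ₀ : θ₀ ∈ Θ')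
    (hpos : ∀ θ ∈ Θ', ∀ x y, 0 < p θ x y) (hsum : ∀ θ ∈ Θ', ∀ x, ∑ y, p θ x y = 1)
    (hC2 : ∀ x y, ContDiffOn ℝ 2 (fun θ => p θ x y) Θ')
    (FI : EuclideanSpace ℝ (Fin d) → X → Matrix (Fin d) (Fin d) ℝ)
    (hFI : ∀ θ ∈ Θ', ∀ x, ∀ i j, FI θ x i j =
      ∑ y, p θ x y * (fderivWithin ℝ (fun t => Real.log (p t x y)) Θ' θ (WithLp.toLp 2 (Pi.single i 1))) *
        (fderivWithin ℝ (fun t => Real.log (p t x y)) Θ' θ (WithLp.toLp 2 (Pi.single j 1))))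
    (hσT : ∀ θ ∈ Θ', ∀ x, sigmaMax (FI θ x) ≤ Matrix.trace (FI θ x))
    (Tstar : X → ℝ) (hT : ∀ θ ∈ Θ', ∀ x, Matrix.trace (FI θ x) ≤ Tstar x)
    (hTstar_int : MeasureTheory.Integrable Tstar μ)
    (hattain : ∀ x, ∀ y : Y, ∃ θ ∈ Θ', ∀ θ' ∈ Θ', p θ' x y ≤ p θ x y)
    (hNML : X → Y) (hNML_spec : ∀ x y, (⨆ θ : Θ', p θ x y) ≤ ⨆ θ : Θ', p θ x (hNML x))
    (hMAP : X → Y) (hMAP_spec : ∀ x y, p θ₀ x y ≤ p θ₀ x (hMAP x))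
    (hNML_int : MeasureTheory.Integrable (fun x => 1 - p θ₀ x (hNML x)) μ)
    (hMAP_int : MeasureTheory.Integrable (fun x => 1 - p θ₀ x (hMAP x)) μ) :
    (∫ x, (1 - p θ₀ x (hNML x)) ∂μ) - (∫ x, (1 - p θ₀ x (hMAP x)) ∂μ) ≤
      2 * ρ * (Fintype.card Y : ℝ) * Real.sqrt (∫ x, Tstar x ∂μ) := by
  classical
  have hple1 : ∀ θ ∈ Θ', ∀ x y, p θ x y ≤ 1 := by
    intro θ hθ x y
    calc p θ x y ≤ ∑ y', p θ x y' :=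
          Finset.single_le_sum (fun y' _ => (hpos θ hθ x y').le) (Finset.mem_univ y)
      _ = 1 := hsum θ hθ x
  have htrace_nonneg : ∀ θ ∈ Θ', ∀ x, 0 ≤ Matrix.trace (FI θ x) := by
    intro θ hθ x
    rw [Matrix.trace]
    refine Finset.sum_nonneg fun i _ => ?_
    rw [Matrix.diag_apply, hFI θ hθ x i i]
    refine Finset.sum_nonneg fun y _ => ?_
    have h1 := (hpos θ hθ x y).le
    nlinarith [sq_nonneg (fderivWithin ℝ (fun t => Real.log (p t x y)) Θ' θ (WithLp.toLp 2 (Pi.single i 1)))]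
  have hT0 : ∀ x, 0 ≤ Tstar x := fun x =>
    le_trans (htrace_nonneg θ₀ hθ₀ x) (hT θ₀ hθ₀ x)
  -- Key pointwise Lipschitz bound
  have hkey : ∀ x y, ∀ θ ∈ Θ', |p θ x y - p θ₀ x y| ≤ Real.sqrt (Tstar x) * ‖θ - θ₀‖ := by
    intro x y θ hθ
    have H := Convex.norm_image_sub_le_of_norm_hasFDerivWithin_le
      (f := fun t => p t x y)
      (f' := fun t => p t x y • fderivWithin ℝ (fun s => Real.log (p s x y)) Θ' t)
      (C := Real.sqrt (Tstar x)) ?_ ?_ hconv hθ₀ hθ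
    · simpa [Real.norm_eq_abs] using H
    · -- derivative
      intro t ht
      have hdp : DifferentiableWithinAt ℝ (fun s => p s x y) Θ' t :=
        ((hC2 x y).differentiableOn (by norm_num)) t ht
      have hdlog : DifferentiableWithinAt ℝ (fun s => Real.log (p s x y)) Θ' t := by
        have := (Real.differentiableAt_log (hpos t ht x y).ne').comp_differentiableWithinAt t hdp
        exact this
      have hL := hdlog.hasFDerivWithinAt
      have hexp := (Real.hasDerivAt_exp (Real.log (p t x y))).comp_hasFDerivWithinAt t hL
      rw [Real.exp_log (hpos t ht x y)] at hexp
      refine hexp.congr (fun s hs => ?_) ?_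
      · simp [Function.comp, Real.exp_log (hpos s hs x y)]
      · simp [Function.comp, Real.exp_log (hpos t ht x y)]
    · -- norm bound
      intro t ht
      set Lf := fderivWithin ℝ (fun s => Real.log (p s x y)) Θ' t with hLf
      set c := p t x y with hc
      have hc0 : 0 < c := hpos t ht x y
      have hc1 : c ≤ 1 := hple1 t ht x y
      have hsq : ∀ i, (c * Lf (WithLp.toLp 2 (Pi.single i 1))) ^ 2 ≤ FI t x i i := by
        intro i
        rw [hFI t ht x i i]
        have hmem : p t x y * (fderivWithin ℝ (fun s => Real.log (p s x y)) Θ' t (WithLp.toLp 2 (Pi.single i 1)))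
            * (fderivWithin ℝ (fun s => Real.log (p s x y)) Θ' t (WithLp.toLp 2 (Pi.single i 1))) ≤
            ∑ y', p t x y' * (fderivWithin ℝ (fun s => Real.log (p s x y')) Θ' t (WithLp.toLp 2 (Pi.single i 1)))
              * (fderivWithin ℝ (fun s => Real.log (p s x y')) Θ' t (WithLp.toLp 2 (Pi.single i 1))) := by
          refine Finset.single_le_sum
            (f := fun y' => p t x y' * (fderivWithin ℝ (fun s => Real.log (p s x y')) Θ' t (WithLp.toLp 2 (Pi.single i 1)))
              * (fderivWithin ℝ (fun s => Real.log (p s x y')) Θ' t (WithLp.toLp 2 (Pi.single i 1))))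
            (fun y' _ => ?_) (Finset.mem_univ y)
          dsimp only
          have := (hpos t ht x y').le
          nlinarith [sq_nonneg (fderivWithin ℝ (fun s => Real.log (p s x y')) Θ' t (WithLp.toLp 2 (Pi.single i 1)))]
        refine le_trans ?_ hmem
        rw [← hLf, ← hc]
        have hnn : 0 ≤ c * (1 - c) * (Lf (WithLp.toLp 2 (Pi.single i 1))) ^ 2 :=
          mul_nonneg (mul_nonneg hc0.le (by linarith)) (sq_nonneg _)
        nlinarith [hnn]
      have hsumsq : ∑ i, (c * Lf (WithLp.toLp 2 (Pi.single i 1))) ^ 2 ≤ Tstar x := by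
        calc ∑ i, (c * Lf (WithLp.toLp 2 (Pi.single i 1))) ^ 2 ≤ ∑ i, FI t x i i :=
              Finset.sum_le_sum fun i _ => hsq i
          _ = Matrix.trace (FI t x) := by rw [Matrix.trace]; rfl
          _ ≤ Tstar x := hT t ht x
      refine ContinuousLinearMap.opNorm_le_bound _ (Real.sqrt_nonneg _) fun v => ?_
      have hv : v = ∑ i, v i • (WithLp.toLp 2 (Pi.single i (1:ℝ)) : EuclideanSpace ℝ (Fin d)) := by
        ext j
        rw [WithLp.ofLp_sum, Finset.sum_apply]
        simp [Pi.single_apply]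
      have happ : (c • Lf) v = ∑ i, v i * (c * Lf (WithLp.toLp 2 (Pi.single i 1))) := by
        conv_lhs => rw [hv]
        rw [map_sum]
        refine Finset.sum_congr rfl fun i _ => ?_
        rw [map_smul]
        simp [smul_eq_mul]
      have hCS := Finset.sum_mul_sq_le_sq_mul_sq Finset.univ (fun i => v i)
        (fun i => c * Lf (WithLp.toLp 2 (Pi.single i 1)))
      have h1 : |∑ i, v i * (c * Lf (WithLp.toLp 2 (Pi.single i 1)))| ≤
          Real.sqrt ((∑ i, v i ^ 2) * (∑ i, (c * Lf (WithLp.toLp 2 (Pi.single i 1))) ^ 2)) := by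
        rw [← Real.sqrt_sq_eq_abs]
        exact Real.sqrt_le_sqrt hCS
      rw [Real.sqrt_mul (Finset.sum_nonneg fun i _ => sq_nonneg _)] at h1
      have h2 : Real.sqrt (∑ i, (c * Lf (WithLp.toLp 2 (Pi.single i 1))) ^ 2) ≤ Real.sqrt (Tstar x) :=
        Real.sqrt_le_sqrt hsumsq
      have hnv : ‖v‖ = Real.sqrt (∑ i, v i ^ 2) := by
        rw [EuclideanSpace.norm_eq]
        congr 1
        refine Finset.sum_congr rfl fun i _ => ?_
        rw [Real.norm_eq_abs, sq_abs]
      rw [Real.norm_eq_abs, happ]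
      calc |∑ i, v i * (c * Lf (WithLp.toLp 2 (Pi.single i 1)))| ≤
            Real.sqrt (∑ i, v i ^ 2) * Real.sqrt (∑ i, (c * Lf (WithLp.toLp 2 (Pi.single i 1))) ^ 2) := h1
        _ ≤ Real.sqrt (∑ i, v i ^ 2) * Real.sqrt (Tstar x) :=
            mul_le_mul_of_nonneg_left h2 (Real.sqrt_nonneg _)
        _ = Real.sqrt (Tstar x) * ‖v‖ := by rw [hnv]; ring
  -- pointwise gap bound
  have nonemptyΘ : Nonempty Θ' := ⟨⟨θ₀, hθ₀⟩⟩
  have hbdd : ∀ x y, BddAbove (Set.range fun θ : Θ' => p θ x y) := by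
    intro x y
    refine ⟨1, ?_⟩
    rintro r ⟨θ, rfl⟩
    exact hple1 θ θ.2 x y
  have hgap : ∀ x, p θ₀ x (hMAP x) - p θ₀ x (hNML x) ≤ 2 * ρ * Real.sqrt (Tstar x) := by
    intro x
    have h1 : p θ₀ x (hMAP x) ≤ ⨆ θ : Θ', p θ x (hMAP x) :=
      le_ciSup (hbdd x (hMAP x)) ⟨θ₀, hθ₀⟩
    have h2 := hNML_spec x (hMAP x)
    have h3 : (⨆ θ : Θ', p θ x (hNML x)) ≤ p θ₀ x (hNML x) + 2 * ρ * Real.sqrt (Tstar x) := by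
      refine ciSup_le fun θ => ?_
      have hk := hkey x (hNML x) θ θ.2
      have hd : ‖(θ : EuclideanSpace ℝ (Fin d)) - θ₀‖ ≤ 2 * ρ := hdiam θ θ.2 θ₀ hθ₀
      have h5 : Real.sqrt (Tstar x) * ‖(θ : EuclideanSpace ℝ (Fin d)) - θ₀‖ ≤
          Real.sqrt (Tstar x) * (2 * ρ) :=
        mul_le_mul_of_nonneg_left hd (Real.sqrt_nonneg _)
      have h6 : p θ x (hNML x) - p θ₀ x (hNML x) ≤ Real.sqrt (Tstar x) * (2 * ρ) :=
        le_trans (le_trans (le_abs_self _) hk) h5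
      have h7 : Real.sqrt (Tstar x) * (2 * ρ) = 2 * ρ * Real.sqrt (Tstar x) := by ring
      linarith
    linarith
  -- integrability and integral manipulations
  have hint_gap : MeasureTheory.Integrable (fun x => p θ₀ x (hMAP x) - p θ₀ x (hNML x)) μ := by
    have heq : (fun x => p θ₀ x (hMAP x) - p θ₀ x (hNML x)) =
        fun x => (1 - p θ₀ x (hNML x)) - (1 - p θ₀ x (hMAP x)) := by
      funext x; ring
    rw [heq]
    exact hNML_int.sub hMAP_int
  have hLHS : (∫ x, (1 - p θ₀ x (hNML x)) ∂μ) - (∫ x, (1 - p θ₀ x (hMAP x)) ∂μ) =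
      ∫ x, (p θ₀ x (hMAP x) - p θ₀ x (hNML x)) ∂μ := by
    rw [← MeasureTheory.integral_sub hNML_int hMAP_int]
    refine MeasureTheory.integral_congr_ae ?_
    filter_upwards with x
    ring
  have hsmeas : MeasureTheory.AEStronglyMeasurable (fun x => Real.sqrt (Tstar x)) μ :=
    Real.continuous_sqrt.comp_aestronglyMeasurable hTstar_int.aestronglyMeasurable
  have hsint : MeasureTheory.Integrable (fun x => Real.sqrt (Tstar x)) μ := by
    refine (hTstar_int.add (MeasureTheory.integrable_const 1)).mono' hsmeas ?_
    filter_upwards with x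
    have h1 := Real.sq_sqrt (hT0 x)
    have h2 := Real.sqrt_nonneg (Tstar x)
    rw [Real.norm_eq_abs, abs_of_nonneg h2]
    simp only [Pi.add_apply]
    nlinarith [sq_nonneg (Real.sqrt (Tstar x) - 1)]
  have hst : MeasureTheory.Integrable (fun x => 2 * ρ * Real.sqrt (Tstar x)) μ :=
    hsint.const_mul _
  have h4 : (∫ x, (p θ₀ x (hMAP x) - p θ₀ x (hNML x)) ∂μ) ≤
      ∫ x, 2 * ρ * Real.sqrt (Tstar x) ∂μ :=
    MeasureTheory.integral_mono hint_gap hst hgap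
  have h5 : (∫ x, 2 * ρ * Real.sqrt (Tstar x) ∂μ) = 2 * ρ * ∫ x, Real.sqrt (Tstar x) ∂μ :=
    MeasureTheory.integral_const_mul _ _
  set I := ∫ x, Tstar x ∂μ with hIdef
  have hI0 : 0 ≤ I := MeasureTheory.integral_nonneg hT0
  have hsqrt_le : (∫ x, Real.sqrt (Tstar x) ∂μ) ≤ Real.sqrt I := by
    rcases hI0.eq_or_lt with h | h
    · have hae : Tstar =ᵐ[μ] 0 :=
        (MeasureTheory.integral_eq_zero_iff_of_nonneg hT0 hTstar_int).mp h.symm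
      have hz : (∫ x, Real.sqrt (Tstar x) ∂μ) = 0 := by
        rw [MeasureTheory.integral_congr_ae (g := fun _ => (0:ℝ))
          (by filter_upwards [hae] with x hx; simp [hx])]
        simp
      rw [hz]
      exact Real.sqrt_nonneg _
    · have hsI : 0 < Real.sqrt I := Real.sqrt_pos.mpr h
      have hpt : ∀ x, Real.sqrt (Tstar x) ≤ (Tstar x + I) / (2 * Real.sqrt I) := by
        intro x
        rw [le_div_iff₀ (by positivity)]
        have h1 := Real.sq_sqrt (hT0 x)
        have h2 := Real.sq_sqrt hI0
        nlinarith [sq_nonneg (Real.sqrt (Tstar x) - Real.sqrt I), Real.sqrt_nonneg (Tstar x)]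
      have hint2 : MeasureTheory.Integrable (fun x => (Tstar x + I) / (2 * Real.sqrt I)) μ :=
        (hTstar_int.add (MeasureTheory.integrable_const I)).div_const _
      have h6 := MeasureTheory.integral_mono hsint hint2 hpt
      have h7 : (∫ x, (Tstar x + I) / (2 * Real.sqrt I) ∂μ) = (I + I) / (2 * Real.sqrt I) := by
        rw [MeasureTheory.integral_div,
          MeasureTheory.integral_add hTstar_int (MeasureTheory.integrable_const I),
          MeasureTheory.integral_const]
        simp
        rfl
      have h8 : (I + I) / (2 * Real.sqrt I) = Real.sqrt I := by
        rw [eq_comm, eq_div_iff (by positivity)]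
        nlinarith [Real.sq_sqrt hI0]
      rw [h7, h8] at h6
      exact h6
  have hK : (1 : ℝ) ≤ (Fintype.card Y : ℝ) := by
    exact_mod_cast Fintype.card_pos
  have hfinal : 2 * ρ * (∫ x, Real.sqrt (Tstar x) ∂μ) ≤
      2 * ρ * (Fintype.card Y : ℝ) * Real.sqrt I := by
    have ha : 2 * ρ * (∫ x, Real.sqrt (Tstar x) ∂μ) ≤ 2 * ρ * Real.sqrt I :=
      mul_le_mul_of_nonneg_left hsqrt_le (by positivity)
    have hb : 2 * ρ * Real.sqrt I ≤ 2 * ρ * (Fintype.card Y : ℝ) * Real.sqrt I :=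
      mul_le_mul_of_nonneg_right (by nlinarith) (Real.sqrt_nonneg I)
    linarith
  rw [hLHS]
  calc (∫ x, (p θ₀ x (hMAP x) - p θ₀ x (hNML x)) ∂μ) ≤
        ∫ x, 2 * ρ * Real.sqrt (Tstar x) ∂μ := h4
    _ = 2 * ρ * ∫ x, Real.sqrt (Tstar x) ∂μ := h5
    _ ≤ 2 * ρ * (Fintype.card Y : ℝ) * Real.sqrt I := hfinal
end
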